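/- arXiv:1301.0497 — 4 statements merged into one kernel-verified Lean document; each statement's English description precedes it below -/
import Mathlib

section
/- Let p be a prime. In SL₂(ℤ_p) define J = {g : the (2,1) entry of g lies in pℤ_p}, U = {[[1,b],[0,1]] : b ∈ ℤ_p}, L = {diag(a,a⁻¹) : a ∈ ℤ_pˣ}, V = {[[1,0],[c,1]] : c ∈ pℤ_p}. Then J is a subgroup of SL₂(ℤ_p), L normalizes U and V, and the multiplication map U × L × V → J, (u,l,v) ↦ u·l·v, is a bijection (an Iwahori decomposition J = ULV). -/
open Matrix

namespace IwahoriAux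

variable (p : ℕ) [Fact p.Prime]

local notation "SL2" => Matrix.SpecialLinearGroup (Fin 2) ℤ_[p]
local notation "M2" => Matrix (Fin 2) (Fin 2) ℤ_[p]

lemma mul_entry (g h : SL2) (i j : Fin 2) :
    (↑(g * h) : M2) i j = (↑g : M2) i 0 * (↑h : M2) 0 j + (↑g : M2) i 1 * (↑h : M2) 1 j := by
  rw [Matrix.SpecialLinearGroup.coe_mul, Matrix.mul_apply, Fin.sum_univ_two]

lemma ulv (a a' b c : ℤ_[p]) :
    !![1, b; 0, 1] * !![a, 0; 0, a'] * !![1, 0; c, 1]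
      = !![a + b * a' * c, b * a'; a' * c, a'] := by
  rw [Matrix.mul_fin_two, Matrix.mul_fin_two]
  norm_num

def Jsub : Subgroup SL2 where
  carrier := {g : SL2 | ∃ x : ℤ_[p], (↑g : M2) 1 0 = (p : ℤ_[p]) * x}
  one_mem' := ⟨0, by simp⟩
  mul_mem' := by
    rintro g h ⟨x, hx⟩ ⟨y, hy⟩
    exact ⟨x * (↑h : M2) 0 0 + (↑g : M2) 1 1 * y, by rw [mul_entry, hx, hy]; ring⟩
  inv_mem' := by
    rintro g ⟨x, hx⟩
    refine ⟨-x, ?_⟩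
    rw [Matrix.SpecialLinearGroup.coe_inv, Matrix.adjugate_fin_two]
    simp [hx]

def Usub : Subgroup SL2 where
  carrier := {g : SL2 | ∃ b : ℤ_[p], (↑g : M2) = !![1, b; 0, 1]}
  one_mem' := ⟨0, by simp [Matrix.one_fin_two]⟩
  mul_mem' := by
    rintro g h ⟨b, hb⟩ ⟨c, hc⟩
    refine ⟨b + c, ?_⟩
    rw [Matrix.SpecialLinearGroup.coe_mul, hb, hc, Matrix.mul_fin_two]
    norm_num [add_comm]
  inv_mem' := by
    rintro g ⟨b, hb⟩
    refine ⟨-b, ?_⟩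
    rw [Matrix.SpecialLinearGroup.coe_inv, hb, Matrix.adjugate_fin_two]
    norm_num

def Lsub : Subgroup SL2 where
  carrier := {g : SL2 | ∃ a : ℤ_[p]ˣ, (↑g : M2) =
      !![(a : ℤ_[p]), 0; 0, ((a⁻¹ : ℤ_[p]ˣ) : ℤ_[p])]}
  one_mem' := ⟨1, by simp [Matrix.one_fin_two]⟩
  mul_mem' := by
    rintro g h ⟨a, ha⟩ ⟨b, hb⟩
    refine ⟨a * b, ?_⟩
    rw [Matrix.SpecialLinearGroup.coe_mul, ha, hb, Matrix.mul_fin_two]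
    norm_num [mul_comm]
  inv_mem' := by
    rintro g ⟨a, ha⟩
    refine ⟨a⁻¹, ?_⟩
    rw [Matrix.SpecialLinearGroup.coe_inv, ha, Matrix.adjugate_fin_two]
    norm_num

def Vsub : Subgroup SL2 where
  carrier := {g : SL2 | ∃ c : ℤ_[p], (∃ x : ℤ_[p], c = (p : ℤ_[p]) * x) ∧
      (↑g : M2) = !![1, 0; c, 1]}
  one_mem' := ⟨0, ⟨0, by ring⟩, by simp [Matrix.one_fin_two]⟩
  mul_mem' := by
    rintro g h ⟨c, ⟨x, hx⟩, hc⟩ ⟨d, ⟨y, hy⟩, hd⟩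
    refine ⟨c + d, ⟨x + y, by rw [hx, hy]; ring⟩, ?_⟩
    rw [Matrix.SpecialLinearGroup.coe_mul, hc, hd, Matrix.mul_fin_two]
    norm_num [add_comm]
  inv_mem' := by
    rintro g ⟨c, ⟨x, hx⟩, hc⟩
    refine ⟨-c, ⟨-x, by rw [hx]; ring⟩, ?_⟩
    rw [Matrix.SpecialLinearGroup.coe_inv, hc, Matrix.adjugate_fin_two]
    norm_num

lemma conjU : ∀ l ∈ Lsub p, ∀ u ∈ Usub p, l * u * l⁻¹ ∈ Usub p := by
  rintro l ⟨a, ha⟩ u ⟨b, hb⟩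
  refine ⟨(a : ℤ_[p]) * b * a, ?_⟩
  have hinv : (↑(l⁻¹) : M2) = !![((a⁻¹ : ℤ_[p]ˣ) : ℤ_[p]), 0; 0, (a : ℤ_[p])] := by
    rw [Matrix.SpecialLinearGroup.coe_inv, ha, Matrix.adjugate_fin_two]
    norm_num
  rw [Matrix.SpecialLinearGroup.coe_mul, Matrix.SpecialLinearGroup.coe_mul, ha, hb, hinv,
    Matrix.mul_fin_two, Matrix.mul_fin_two]
  norm_num [Units.mul_inv, mul_comm, mul_assoc]

lemma conjV : ∀ l ∈ Lsub p, ∀ v ∈ Vsub p, l * v * l⁻¹ ∈ Vsub p := by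
  rintro l ⟨a, ha⟩ v ⟨c, ⟨x, hx⟩, hc⟩
  refine ⟨((a⁻¹ : ℤ_[p]ˣ) : ℤ_[p]) * c * a⁻¹, ⟨((a⁻¹ : ℤ_[p]ˣ) : ℤ_[p]) * x * a⁻¹, by
    rw [hx]; ring⟩, ?_⟩
  have hinv : (↑(l⁻¹) : M2) = !![((a⁻¹ : ℤ_[p]ˣ) : ℤ_[p]), 0; 0, (a : ℤ_[p])] := by
    rw [Matrix.SpecialLinearGroup.coe_inv, ha, Matrix.adjugate_fin_two]
    norm_num
  rw [Matrix.SpecialLinearGroup.coe_mul, Matrix.SpecialLinearGroup.coe_mul, ha, hc, hinv,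
    Matrix.mul_fin_two, Matrix.mul_fin_two]
  norm_num [Units.mul_inv, Units.inv_mul, mul_comm, mul_assoc]

lemma normU : Lsub p ≤ Subgroup.normalizer (Usub p : Set SL2) := by
  intro l hl
  rw [Subgroup.mem_normalizer_iff]
  intro n
  constructor
  · exact fun hn => conjU p l hl n hn
  · intro hn
    have h2 := conjU p l⁻¹ ((Lsub p).inv_mem hl) _ hn
    rwa [show l⁻¹ * (l * n * l⁻¹) * l⁻¹⁻¹ = n by group] at h2

lemma normV : Lsub p ≤ Subgroup.normalizer (Vsub p : Set SL2) := by
  intro l hl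
  rw [Subgroup.mem_normalizer_iff]
  intro n
  constructor
  · exact fun hn => conjV p l hl n hn
  · intro hn
    have h2 := conjV p l⁻¹ ((Lsub p).inv_mem hl) _ hn
    rwa [show l⁻¹ * (l * n * l⁻¹) * l⁻¹⁻¹ = n by group] at h2

lemma unit_entry (g : SL2) (hx : ∃ x : ℤ_[p], (↑g : M2) 1 0 = (p : ℤ_[p]) * x) :
    IsUnit ((↑g : M2) 1 1) := by
  obtain ⟨x, hx⟩ := hx
  by_contra h
  have hdvd : (p : ℤ_[p]) ∣ (↑g : M2) 1 1 := by
    rw [← PadicInt.norm_lt_one_iff_dvd]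
    exact lt_of_le_of_ne (PadicInt.norm_le_one _) (fun he => h (PadicInt.isUnit_iff.mpr he))
  obtain ⟨y, hy⟩ := hdvd
  have hdet : (↑g : M2) 0 0 * (↑g : M2) 1 1 - (↑g : M2) 0 1 * (↑g : M2) 1 0 = 1 := by
    rw [← Matrix.det_fin_two]; exact g.2
  have : IsUnit (p : ℤ_[p]) :=
    isUnit_of_dvd_one ⟨(↑g : M2) 0 0 * y - (↑g : M2) 0 1 * x, by
      linear_combination (norm := ring_nf)
        (-1) * hdet + ((↑g : M2) 0 0) * hy - ((↑g : M2) 0 1) * hx⟩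
  exact PadicInt.prime_p.not_unit this

end IwahoriAux

/-- In `SL₂(ℤ_p)`, the set `J` of matrices whose `(2,1)` entry lies in `pℤ_p` is a subgroup;
the sets `U` (upper unipotent), `L` (diagonal with unit entries) and `V` (lower unipotent
with `(2,1)` entry in `pℤ_p`) are subgroups; `L` normalizes `U` and `V`; and the
multiplication map `U × L × V → J`, `(u, l, v) ↦ u·l·v`, is a bijection
(the Iwahori decomposition `J = ULV`). -/
theorem sl2_zp_iwahori_decomposition (p : ℕ) [Fact p.Prime] :
    ∃ J U L V : Subgroup (Matrix.SpecialLinearGroup (Fin 2) ℤ_[p]),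
      (J : Set (Matrix.SpecialLinearGroup (Fin 2) ℤ_[p])) =
        {g : Matrix.SpecialLinearGroup (Fin 2) ℤ_[p] | ∃ x : ℤ_[p], (↑g : Matrix (Fin 2) (Fin 2) ℤ_[p]) 1 0 = (p : ℤ_[p]) * x} ∧
      (U : Set (Matrix.SpecialLinearGroup (Fin 2) ℤ_[p])) =
        {g : Matrix.SpecialLinearGroup (Fin 2) ℤ_[p] | ∃ b : ℤ_[p], (↑g : Matrix (Fin 2) (Fin 2) ℤ_[p]) = !![1, b; 0, 1]} ∧
      (L : Set (Matrix.SpecialLinearGroup (Fin 2) ℤ_[p])) =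
        {g : Matrix.SpecialLinearGroup (Fin 2) ℤ_[p] | ∃ a : ℤ_[p]ˣ, (↑g : Matrix (Fin 2) (Fin 2) ℤ_[p]) =
          !![(a : ℤ_[p]), 0; 0, ((a⁻¹ : ℤ_[p]ˣ) : ℤ_[p])]} ∧
      (V : Set (Matrix.SpecialLinearGroup (Fin 2) ℤ_[p])) =
        {g : Matrix.SpecialLinearGroup (Fin 2) ℤ_[p] | ∃ c : ℤ_[p], (∃ x : ℤ_[p], c = (p : ℤ_[p]) * x) ∧
          (↑g : Matrix (Fin 2) (Fin 2) ℤ_[p]) = !![1, 0; c, 1]} ∧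
      L ≤ Subgroup.normalizer (U : Set _) ∧ L ≤ Subgroup.normalizer (V : Set _) ∧
      Set.BijOn
        (fun q : Matrix.SpecialLinearGroup (Fin 2) ℤ_[p] ×
            Matrix.SpecialLinearGroup (Fin 2) ℤ_[p] ×
            Matrix.SpecialLinearGroup (Fin 2) ℤ_[p] => q.1 * q.2.1 * q.2.2)
        ((U : Set _) ×ˢ (L : Set _) ×ˢ (V : Set _)) (J : Set _) := by
  refine ⟨IwahoriAux.Jsub p, IwahoriAux.Usub p, IwahoriAux.Lsub p, IwahoriAux.Vsub p, rfl, rfl, rfl, rfl, IwahoriAux.normU p, IwahoriAux.normV p, ?_, ?_, ?_⟩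
  · -- MapsTo
    rintro ⟨u, l, v⟩ ⟨⟨b, hb⟩, ⟨a, ha⟩, ⟨c, ⟨x, hx⟩, hc⟩⟩
    refine ⟨((a⁻¹ : ℤ_[p]ˣ) : ℤ_[p]) * x, ?_⟩
    show (↑(u * l * v) : Matrix (Fin 2) (Fin 2) ℤ_[p]) 1 0 = _
    rw [Matrix.SpecialLinearGroup.coe_mul, Matrix.SpecialLinearGroup.coe_mul, hb, ha, hc, IwahoriAux.ulv]
    simp [hx]
    ring
  · -- InjOn
    rintro ⟨u1, l1, v1⟩ ⟨⟨b1, hb1⟩, ⟨a1, ha1⟩, ⟨c1, hc1d, hc1⟩⟩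
      ⟨u2, l2, v2⟩ ⟨⟨b2, hb2⟩, ⟨a2, ha2⟩, ⟨c2, hc2d, hc2⟩⟩ h
    simp only at h
    have hM : (↑(u1 * l1 * v1) : Matrix (Fin 2) (Fin 2) ℤ_[p])
        = (↑(u2 * l2 * v2) : Matrix (Fin 2) (Fin 2) ℤ_[p]) := by rw [h]
    rw [Matrix.SpecialLinearGroup.coe_mul, Matrix.SpecialLinearGroup.coe_mul, hb1, ha1, hc1, IwahoriAux.ulv,
      Matrix.SpecialLinearGroup.coe_mul, Matrix.SpecialLinearGroup.coe_mul, hb2, ha2, hc2, IwahoriAux.ulv]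
      at hM
    have h11 : ((a1⁻¹ : ℤ_[p]ˣ) : ℤ_[p]) = ((a2⁻¹ : ℤ_[p]ˣ) : ℤ_[p]) := by
      have := congrFun (congrFun hM 1) 1; simpa using this
    have ha : a1 = a2 := by
      rw [← inv_inv a1, ← inv_inv a2]
      exact congrArg _ (Units.ext h11)
    have hc : c1 = c2 := by
      have h10 : ((a1⁻¹ : ℤ_[p]ˣ) : ℤ_[p]) * c1 = ((a2⁻¹ : ℤ_[p]ˣ) : ℤ_[p]) * c2 := by
        have := congrFun (congrFun hM 1) 0; simpa using this
      rw [← ha] at h10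
      exact mul_left_cancel₀ (Units.ne_zero _) h10
    have hb : b1 = b2 := by
      have h01 : b1 * ((a1⁻¹ : ℤ_[p]ˣ) : ℤ_[p]) = b2 * ((a2⁻¹ : ℤ_[p]ˣ) : ℤ_[p]) := by
        have := congrFun (congrFun hM 0) 1; simpa using this
      rw [← ha] at h01
      exact mul_right_cancel₀ (Units.ne_zero _) h01
    refine Prod.ext ?_ (Prod.ext ?_ ?_)
    · exact Subtype.ext (hb1.trans (by rw [hb]; exact hb2.symm))
    · exact Subtype.ext (ha1.trans (by rw [ha]; exact ha2.symm))
    · exact Subtype.ext (hc1.trans (by rw [hc]; exact hc2.symm))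
  · -- SurjOn
    rintro g ⟨x, hx⟩
    have hu : IsUnit ((↑g : Matrix (Fin 2) (Fin 2) ℤ_[p]) 1 1) := IwahoriAux.unit_entry p g ⟨x, hx⟩
    set a : ℤ_[p]ˣ := hu.unit⁻¹ with ha_def
    have hainv : ((a⁻¹ : ℤ_[p]ˣ) : ℤ_[p]) = (↑g : Matrix (Fin 2) (Fin 2) ℤ_[p]) 1 1 := by
      rw [ha_def, inv_inv]; exact hu.unit_spec
    have hA : (↑g : Matrix (Fin 2) (Fin 2) ℤ_[p]) 1 1 * (a : ℤ_[p]) = 1 := by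
      rw [← hainv]; exact_mod_cast Units.inv_mul a
    have hdet : (↑g : Matrix (Fin 2) (Fin 2) ℤ_[p]) 0 0 * (↑g : Matrix (Fin 2) (Fin 2) ℤ_[p]) 1 1
        - (↑g : Matrix (Fin 2) (Fin 2) ℤ_[p]) 0 1 * (↑g : Matrix (Fin 2) (Fin 2) ℤ_[p]) 1 0 = 1 := by
      rw [← Matrix.det_fin_two]; exact g.2
    set G00 := (↑g : Matrix (Fin 2) (Fin 2) ℤ_[p]) 0 0
    set G01 := (↑g : Matrix (Fin 2) (Fin 2) ℤ_[p]) 0 1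
    set G10 := (↑g : Matrix (Fin 2) (Fin 2) ℤ_[p]) 1 0
    set G11 := (↑g : Matrix (Fin 2) (Fin 2) ℤ_[p]) 1 1
    refine ⟨⟨⟨!![1, G01 * (a : ℤ_[p]); 0, 1], by simp [Matrix.det_fin_two_of]⟩,
      ⟨!![(a : ℤ_[p]), 0; 0, ((a⁻¹ : ℤ_[p]ˣ) : ℤ_[p])], by
        simp [Matrix.det_fin_two_of, Units.mul_inv]⟩,
      ⟨!![1, 0; (a : ℤ_[p]) * G10, 1], by simp [Matrix.det_fin_two_of]⟩⟩,
      ⟨⟨G01 * (a : ℤ_[p]), rfl⟩, ⟨a, rfl⟩,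
        ⟨(a : ℤ_[p]) * G10, ⟨(a : ℤ_[p]) * x, by rw [hx]; ring⟩, rfl⟩⟩, ?_⟩
    apply Subtype.ext
    show (_ : Matrix (Fin 2) (Fin 2) ℤ_[p]) = ↑g
    rw [Matrix.SpecialLinearGroup.coe_mul, Matrix.SpecialLinearGroup.coe_mul]
    show !![1, G01 * (a : ℤ_[p]); 0, 1] * !![(a : ℤ_[p]), 0; 0, ((a⁻¹ : ℤ_[p]ˣ) : ℤ_[p])]
        * !![1, 0; (a : ℤ_[p]) * G10, 1] = ↑g
    rw [IwahoriAux.ulv, hainv]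
    ext i j
    fin_cases i <;> fin_cases j <;>
      simp only [Matrix.cons_val', Matrix.cons_val_zero, Matrix.cons_val_one, Matrix.head_cons,
        Matrix.head_fin_const, Matrix.empty_val', Matrix.cons_val_fin_one, Fin.isValue]
    · show (a : ℤ_[p]) + G01 * (a : ℤ_[p]) * G11 * ((a : ℤ_[p]) * G10) = G00
      linear_combination (norm := ring_nf) (-(a : ℤ_[p])) * hdet
        + (G00 + G01 * (a : ℤ_[p]) * G10) * hA
    · show G01 * (a : ℤ_[p]) * G11 = G01
      linear_combination (norm := ring_nf) G01 * hA
    · show G11 * ((a : ℤ_[p]) * G10) = G10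
      linear_combination (norm := ring_nf) G10 * hA
    · rfl
end

section
/- The map Φ from the center Z(ℂ[L]) of the group algebra ℂ[L] to the space of linear maps φ : ℂ[J]e_V → ℂ[J]e_U satisfying φ(a·x·b) = a·φ(x)·b for all a ∈ ℂ[J] and b ∈ ℂ[L], defined by Φ(z) : x ↦ x·e_U·z, is a ℂ-linear isomorphism. -/
open scoped BigOperators

set_option maxHeartbeats 1000000
set_option synthInstance.maxHeartbeats 1000000

noncomputable section

namespace Parahoric

variable {G : Type*} [Group G]

/-- An Iwahori decomposition of the subgroup `I` of `G` as `I = W·M·W̄`: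
`M` normalizes `W` and `W̄`, and the multiplication map `W × M × W̄ → I` is a bijection. -/
def IwahoriDecomp (I W M Wb : Subgroup G) : Prop :=
  M ≤ Subgroup.normalizer (W : Set G) ∧ M ≤ Subgroup.normalizer (Wb : Set G) ∧
    Set.BijOn (fun q : G × G × G => q.1 * q.2.1 * q.2.2)
      ((W : Set G) ×ˢ (M : Set G) ×ˢ (Wb : Set G)) (I : Set G)

/-- The averaging idempotent `e_H = |H|⁻¹ ∑_{h ∈ H} h` in the group algebra `ℂ[G]`. -/
def algAvg (H : Subgroup G) [Finite H] : MonoidAlgebra ℂ G :=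
  letI : Fintype H := Fintype.ofFinite H
  (Nat.card H : ℂ)⁻¹ • ∑ h : H, MonoidAlgebra.of ℂ G (h : G)

/-- The canonical algebra embedding `ℂ[L] → ℂ[G]` for a subgroup `L ≤ G`. -/
def algMap (L : Subgroup G) : MonoidAlgebra ℂ ↥L →ₐ[ℂ] MonoidAlgebra ℂ G :=
  MonoidAlgebra.mapDomainAlgHom ℂ ℂ L.subtype

/-- `ℂ[G]·e`, the range of right multiplication by `e` on the group algebra. -/
def ralg (G : Type*) [Group G] (e : MonoidAlgebra ℂ G) : Submodule ℂ (MonoidAlgebra ℂ G) :=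
  LinearMap.range (LinearMap.mulRight ℂ e)

section Reps

variable {W W₁ W₂ : Type*} [AddCommGroup W] [Module ℂ W]
  [AddCommGroup W₁] [Module ℂ W₁] [AddCommGroup W₂] [Module ℂ W₂]

/-- A ℂ-submodule is stable under a representation. -/
def Stable (π : Representation ℂ G W) (S : Submodule ℂ W) : Prop :=
  ∀ g : G, ∀ x ∈ S, π g x ∈ S

/-- Irreducibility of a representation (equivalently, simplicity of the corresponding
`ℂ[G]`-module): the space is nonzero and has no nontrivial invariant subspaces. -/
def IsIrreducible (π : Representation ℂ G W) : Prop :=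
  (⊤ : Submodule ℂ W) ≠ ⊥ ∧
    ∀ T : Submodule ℂ W, Stable π T → T = ⊥ ∨ T = ⊤

/-- Irreducibility of an invariant subspace `S` of an ambient representation. -/
def IsIrreducibleSub (π : Representation ℂ G W) (S : Submodule ℂ W) : Prop :=
  S ≠ ⊥ ∧ ∀ T : Submodule ℂ W, T ≤ S → Stable π T → T = ⊥ ∨ T = S

/-- The space `Hom_G(ρ, τ)` of intertwining operators. -/
def repHom (ρ : Representation ℂ G W₁) (τ : Representation ℂ G W₂) :
    Submodule ℂ (W₁ →ₗ[ℂ] W₂) where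
  carrier := {φ | ∀ (g : G) (x : W₁), φ (ρ g x) = τ g (φ x)}
  add_mem' := by
    intro φ ψ hφ hψ g x
    simp [hφ g x, hψ g x]
  zero_mem' := by intro g x; simp
  smul_mem' := by
    intro c φ hφ g x
    simp [hφ g x]

/-- `Hom_G(ρ, τ|_T)` where the target is an invariant subspace `T` of `τ`. -/
def homFullSub (ρ : Representation ℂ G W₁) (τ : Representation ℂ G W₂)
    (T : Submodule ℂ W₂) : Submodule ℂ (W₁ →ₗ[ℂ] ↥T) where
  carrier := {φ | ∀ (g : G) (x : W₁), (φ (ρ g x) : W₂) = τ g ↑(φ x)}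
  add_mem' := by
    intro φ ψ hφ hψ g x
    simp [hφ g x, hψ g x]
  zero_mem' := by intro g x; simp
  smul_mem' := by
    intro c φ hφ g x
    simp [hφ g x]

/-- `Hom_G(ρ|_S, τ)` where the source is an invariant subspace `S` of `ρ`. -/
def homSubFull (ρ : Representation ℂ G W₁) (S : Submodule ℂ W₁)
    (τ : Representation ℂ G W₂) : Submodule ℂ (↥S →ₗ[ℂ] W₂) where
  carrier := {φ | ∀ (g : G) (x : S) (hx : ρ g ↑x ∈ S), φ ⟨ρ g ↑x, hx⟩ = τ g (φ x)}
  add_mem' := by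
    intro φ ψ hφ hψ g x hx
    simp [hφ g x hx, hψ g x hx]
  zero_mem' := by intro g x hx; simp
  smul_mem' := by
    intro c φ hφ g x hx
    simp [hφ g x hx]

/-- `Hom_G(ρ|_S, τ|_T)` between invariant subspaces. -/
def homSubSub (ρ : Representation ℂ G W₁) (S : Submodule ℂ W₁)
    (τ : Representation ℂ G W₂) (T : Submodule ℂ W₂) : Submodule ℂ (↥S →ₗ[ℂ] ↥T) where
  carrier := {φ | ∀ (g : G) (x : S) (hx : ρ g ↑x ∈ S), (φ ⟨ρ g ↑x, hx⟩ : W₂) = τ g ↑(φ x)}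
  add_mem' := by
    intro φ ψ hφ hψ g x hx
    simp [hφ g x hx, hψ g x hx]
  zero_mem' := by intro g x hx; simp
  smul_mem' := by
    intro c φ hφ g x hx
    simp [hφ g x hx]

/-- Isomorphism of representations. -/
def IsoRep (ρ : Representation ℂ G W₁) (τ : Representation ℂ G W₂) : Prop :=
  ∃ e : W₁ ≃ₗ[ℂ] W₂, ∀ (g : G) (x : W₁), e (ρ g x) = τ g (e x)

/-- Equivariant isomorphism from a representation onto an invariant subspace. -/
def IsoFullSub (ρ : Representation ℂ G W₁) (τ : Representation ℂ G W₂)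
    (T : Submodule ℂ W₂) : Prop :=
  ∃ e : W₁ ≃ₗ[ℂ] ↥T, ∀ (g : G) (x : W₁), (e (ρ g x) : W₂) = τ g ↑(e x)

/-- Equivariant isomorphism from an invariant subspace onto a representation. -/
def IsoSubFull (ρ : Representation ℂ G W₁) (S : Submodule ℂ W₁)
    (τ : Representation ℂ G W₂) : Prop :=
  ∃ e : ↥S ≃ₗ[ℂ] W₂, ∀ (g : G) (x : S) (hx : ρ g ↑x ∈ S), e ⟨ρ g ↑x, hx⟩ = τ g (e x)

/-- Equivariant isomorphism between invariant subspaces. -/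
def IsoSubSub (ρ : Representation ℂ G W₁) (S : Submodule ℂ W₁)
    (τ : Representation ℂ G W₂) (T : Submodule ℂ W₂) : Prop :=
  ∃ e : ↥S ≃ₗ[ℂ] ↥T, ∀ (g : G) (x : S) (hx : ρ g ↑x ∈ S),
    (e ⟨ρ g ↑x, hx⟩ : W₂) = τ g ↑(e x)

/-- The operator `π(e_H) = |H|⁻¹ ∑_{h ∈ H} π(h)`. -/
def avgMap (π : Representation ℂ G W) (H : Subgroup G) [Finite H] : W →ₗ[ℂ] W :=
  letI : Fintype H := Fintype.ofFinite H
  (Nat.card H : ℂ)⁻¹ • ∑ h : H, π (h : G)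

/-- The subspace `W^H` of `H`-fixed vectors. -/
def fixedSub (π : Representation ℂ G W) (H : Subgroup G) : Submodule ℂ W where
  carrier := {w | ∀ h ∈ H, π h w = w}
  add_mem' := by
    intro a b ha hb h hh
    simp [ha h hh, hb h hh]
  zero_mem' := by intro h hh; simp
  smul_mem' := by
    intro c a ha h hh
    simp [ha h hh]

/-- Restriction of a representation to a subgroup. -/
def resRep (π : Representation ℂ G W) (L : Subgroup G) : Representation ℂ ↥L W :=
  π.comp L.subtype

/-- The right-translation representation of `G` on the function space `G → W`. -/
def rtRep (G : Type*) [Group G] (W : Type*) [AddCommGroup W] [Module ℂ W] :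
    Representation ℂ G (G → W) where
  toFun g :=
    { toFun := fun f x => f (x * g)
      map_add' := fun _ _ => rfl
      map_smul' := fun _ _ => rfl }
  map_one' := LinearMap.ext fun f => funext fun x => by simp
  map_mul' := fun g₁ g₂ => LinearMap.ext fun f => funext fun x => by
    simp [mul_assoc]

/-- The left-translation representation of `G` on the function space `G → W`. -/
def ltRep (G : Type*) [Group G] (W : Type*) [AddCommGroup W] [Module ℂ W] :
    Representation ℂ G (G → W) where
  toFun g :=
    { toFun := fun f x => f (g⁻¹ * x)
      map_add' := fun _ _ => rfl
      map_smul' := fun _ _ => rfl }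
  map_one' := LinearMap.ext fun f => funext fun x => by simp
  map_mul' := fun g₁ g₂ => LinearMap.ext fun f => funext fun x => by
    simp [mul_assoc]

/-- Left translation by a fixed group element, as a linear operator on `G → W`. -/
def lTrans (W : Type*) [AddCommGroup W] [Module ℂ W] (g : G) : (G → W) →ₗ[ℂ] (G → W) where
  toFun f := fun x => f (g * x)
  map_add' := fun _ _ => rfl
  map_smul' := fun _ _ => rfl

/-- The averaging operator `I_U : f ↦ (j ↦ |U|⁻¹ ∑_{u ∈ U} f(u·j))` on `G → W`. -/
def avgL (U : Subgroup G) [Finite U] (W : Type*) [AddCommGroup W] [Module ℂ W] :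
    (G → W) →ₗ[ℂ] (G → W) :=
  letI : Fintype U := Fintype.ofFinite U
  (Nat.card U : ℂ)⁻¹ • ∑ u : U, lTrans W (u : G)

/-- The module `Ind_{LU}^G (infl_L^{LU} ρ)` of functions `f : G → W` with
`f(u·l·g) = ρ(l)·f(g)` for `u ∈ U`, `l ∈ L`; `G` acts by right translation (`rtRep`).
This is the standard concrete model of `ℂ[G]·e_U ⊗_{ℂ[L]} ρ`. -/
def indInfl (U L : Subgroup G) {W : Type*} [AddCommGroup W] [Module ℂ W]
    (ρ : Representation ℂ ↥L W) : Submodule ℂ (G → W) where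
  carrier := {f | ∀ (u l g : G) (hu : u ∈ U) (hl : l ∈ L),
    f (u * l * g) = ρ ⟨l, hl⟩ (f g)}
  add_mem' := by
    intro f₁ f₂ h₁ h₂ u l g hu hl
    simp [h₁ u l g hu hl, h₂ u l g hu hl]
  zero_mem' := by intro u l g hu hl; simp
  smul_mem' := by
    intro c f hf u l g hu hl
    simp [hf u l g hu hl]

/-- Parahoric induction `i_{U,V} ρ = ℂ[G]e_V e_U ⊗_{ℂ[L]} ρ`, realized concretely as the
image of the averaging operator `I_U` on `Ind_{LV}^G (infl ρ)`; `G` acts by `rtRep`. -/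
def parInd (U L V : Subgroup G) [Finite U] {W : Type*} [AddCommGroup W] [Module ℂ W]
    (ρ : Representation ℂ ↥L W) : Submodule ℂ (G → W) :=
  (indInfl V L ρ).map (avgL U W)

/-- Parahoric restriction `r_{U,V} π`: the image of the operator `π(e_U)·π(e_V)`. -/
def parRes (π : Representation ℂ G W) (U V : Subgroup G) [Finite U] [Finite V] :
    Submodule ℂ W :=
  LinearMap.range (avgMap π U ∘ₗ avgMap π V)

/-- Conjugation `l ↦ w·l·w⁻¹` as an endomorphism of a subgroup `L` normalized by `w`. -/
def conjHom (L : Subgroup G) (w : G) (hw : ∀ l ∈ L, w * l * w⁻¹ ∈ L) : ↥L →* ↥L where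
  toFun l := ⟨w * ↑l * w⁻¹, hw ↑l l.2⟩
  map_one' := by ext; simp
  map_mul' := fun a b => by ext; simp [mul_assoc]

/-- External direct sum of two representations of the same group. -/
def pairRep (ρ : Representation ℂ G W₁) (τ : Representation ℂ G W₂) :
    Representation ℂ G (W₁ × W₂) where
  toFun g := (ρ g).prodMap (τ g)
  map_one' := by ext x <;> simp
  map_mul' := fun g₁ g₂ => by ext x <;> simp

/-- The induced module `ℂ[G] ⊗_{ℂ[J]} W` (for `J ≤ G` of finite index this is all of the
induced module; in general, its "compactly induced" variant is `cInd`): functions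
`f : G → W` with `f(g·j) = π(j)⁻¹ f(g)`, the action of `G` being left translation. -/
def indUp (J : Subgroup G) {W : Type*} [AddCommGroup W] [Module ℂ W]
    (π : Representation ℂ ↥J W) : Submodule ℂ (G → W) where
  carrier := {f | ∀ (g : G) (j : ↥J), f (g * ↑j) = π j⁻¹ (f g)}
  add_mem' := by
    intro f₁ f₂ h₁ h₂ g j
    simp [h₁ g j, h₂ g j]
  zero_mem' := by intro g j; simp
  smul_mem' := by
    intro c f hf g j
    simp [hf g j]

/-- The induced module `ℂ[G] ⊗_{ℂ[J]} W` for an arbitrary subgroup `J` of a (possibly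
infinite) group `G`: functions `f : G → W` with `f(g·j) = π(j)⁻¹ f(g)` supported on
finitely many cosets `g·J`; the action of `G` is left translation (`ltRep`). -/
def cInd (J : Subgroup G) {W : Type*} [AddCommGroup W] [Module ℂ W]
    (π : Representation ℂ ↥J W) : Submodule ℂ (G → W) where
  carrier := {f | (∀ (g : G) (j : ↥J), f (g * ↑j) = π j⁻¹ (f g)) ∧
    ∃ S : Set G, S.Finite ∧ ∀ g : G, f g ≠ 0 → ∃ s ∈ S, ∃ j : ↥J, g = s * ↑j}
  add_mem' := by
    rintro f₁ f₂ ⟨h₁, S₁, hS₁, hS₁'⟩ ⟨h₂, S₂, hS₂, hS₂'⟩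
    refine ⟨fun g j => by simp [h₁ g j, h₂ g j], S₁ ∪ S₂, hS₁.union hS₂, fun g hg => ?_⟩
    by_cases hf₁ : f₁ g = 0
    · have hf₂ : f₂ g ≠ 0 := by
        intro h
        exact hg (by simp [Pi.add_apply, hf₁, h])
      obtain ⟨s, hs, j, hj⟩ := hS₂' g hf₂
      exact ⟨s, Set.mem_union_right _ hs, j, hj⟩
    · obtain ⟨s, hs, j, hj⟩ := hS₁' g hf₁
      exact ⟨s, Set.mem_union_left _ hs, j, hj⟩
  zero_mem' := by
    refine ⟨fun g j => by simp, ∅, Set.finite_empty, fun g hg => absurd rfl hg⟩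
  smul_mem' := by
    rintro c f ⟨h, S, hS, hS'⟩
    refine ⟨fun g j => by simp [h g j], S, hS, fun g hg => ?_⟩
    apply hS'
    intro h0
    exact hg (by simp [Pi.smul_apply, h0])

/-- The space of functions `f : J → ℂ` with `f(b·g) = χ(b)·f(g)`: the concrete model of the
induced representation `Ind_B^J χ` of a one-dimensional character, `J` acting by `rtRep`. -/
def indChar {J : Type*} [Group J] (B : Subgroup J) (χ : ↥B →* ℂˣ) :
    Submodule ℂ (J → ℂ) where
  carrier := {f | ∀ (b : ↥B) (g : J), f (↑b * g) = (χ b : ℂ) * f g}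
  add_mem' := by
    intro f₁ f₂ h₁ h₂ b g
    simp [h₁ b g, h₂ b g, mul_add]
  zero_mem' := by intro b g; simp
  smul_mem' := by
    intro c f hf b g
    simp [hf b g]
    ring

/-- The space `Hom_{J ∩ t⁻¹Jt}(π, π^t)` of linear maps `φ` with
`φ ∘ π(x) = π(t·x·t⁻¹) ∘ φ` for all `x ∈ J ∩ t⁻¹Jt`. -/
def twistedIntertwiners {W : Type*} [AddCommGroup W] [Module ℂ W]
    (J : Subgroup G) (π : Representation ℂ ↥J W) (t : G) :
    Submodule ℂ (W →ₗ[ℂ] W) where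
  carrier := {φ | ∀ (x : G) (hx : x ∈ J) (hx' : t * x * t⁻¹ ∈ J),
    φ ∘ₗ π ⟨x, hx⟩ = π ⟨t * x * t⁻¹, hx'⟩ ∘ₗ φ}
  add_mem' := by
    intro φ ψ hφ hψ x hx hx'
    simp only [LinearMap.add_comp, LinearMap.comp_add, hφ x hx hx', hψ x hx hx']
  zero_mem' := by intro x hx hx'; simp
  smul_mem' := by
    intro c φ hφ x hx hx'
    simp only [LinearMap.smul_comp, LinearMap.comp_smul, hφ x hx hx']

/-- The dimension `dim_ℂ S` of a subspace `S` (e.g. of a space of intertwining maps). -/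
def dimC {M : Type*} [AddCommGroup M] [Module ℂ M] (S : Submodule ℂ M) : ℕ :=
  Module.finrank ℂ ↥S

/-- Finite-dimensionality of a subspace over `ℂ`. -/
def IsFinDimSub {M : Type*} [AddCommGroup M] [Module ℂ M] (S : Submodule ℂ M) : Prop :=
  FiniteDimensional ℂ ↥S

end Reps

section Statement2

section AuxPf
set_option linter.unusedSectionVars false
open MonoidAlgebra
variable {J : Type*} [Group J] [Fintype J]

lemma algAvg_def' (H : Subgroup J) [Fintype H] :
    algAvg H = (Nat.card H : ℂ)⁻¹ • ∑ h : H, MonoidAlgebra.of ℂ J (h : J) := by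
  unfold algAvg
  congr 1
  apply Finset.sum_congr _ (fun _ _ => rfl)
  congr 1
  exact Subsingleton.elim _ _

lemma single_mul_avg' (H : Subgroup J) [Fintype H] {h : J} (hh : h ∈ H) :
    MonoidAlgebra.single h (1:ℂ) * algAvg H = algAvg H := by
  rw [algAvg_def', mul_smul_comm, Finset.mul_sum]
  congr 1
  refine Fintype.sum_equiv (Equiv.mulLeft ⟨h, hh⟩) _ _ (fun x => ?_)
  rw [of_apply, MonoidAlgebra.single_mul_single, one_mul]
  rfl

lemma avg_mul_single' (H : Subgroup J) [Fintype H] {h : J} (hh : h ∈ H) :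
    algAvg H * MonoidAlgebra.single h (1:ℂ) = algAvg H := by
  rw [algAvg_def', smul_mul_assoc, Finset.sum_mul]
  congr 1
  refine Fintype.sum_equiv (Equiv.mulRight ⟨h, hh⟩) _ _ (fun x => ?_)
  rw [of_apply, MonoidAlgebra.single_mul_single, mul_one]
  rfl

lemma avg_idem' (H : Subgroup J) [Fintype H] :
    algAvg H * algAvg H = algAvg H := by
  nth_rewrite 1 [algAvg_def']
  rw [smul_mul_assoc, Finset.sum_mul]
  have : ∀ h : H, MonoidAlgebra.of ℂ J (h:J) * algAvg H = algAvg H := fun h =>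
    single_mul_avg' H h.2
  rw [Finset.sum_congr rfl (fun h _ => this h), Finset.sum_const, Finset.card_univ]
  rw [Nat.card_eq_fintype_card, ← Nat.cast_smul_eq_nsmul ℂ, smul_smul,
    inv_mul_cancel₀ (by exact_mod_cast Fintype.card_ne_zero), one_smul]

lemma algMap_single' (L : Subgroup J) (l : ↥L) (c : ℂ) :
    algMap L (MonoidAlgebra.single l c) = MonoidAlgebra.single (↑l : J) c := by
  simp [algMap, MonoidAlgebra.mapDomainAlgHom]

lemma algMap_apply_mem' (L : Subgroup J) (z : MonoidAlgebra ℂ ↥L) {y : J} (hy : y ∈ L) :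
    (algMap L z).coeff y = z.coeff ⟨y, hy⟩ := by
  have : (algMap L z).coeff y = Finsupp.mapDomain L.subtype z.coeff (L.subtype ⟨y, hy⟩) := rfl
  rw [this, Finsupp.mapDomain_apply (L.subtype_injective)]

lemma algMap_apply_not_mem' (L : Subgroup J) (z : MonoidAlgebra ℂ ↥L) {y : J} (hy : y ∉ L) :
    (algMap L z).coeff y = 0 := by
  have : (algMap L z).coeff y = Finsupp.mapDomain L.subtype z.coeff y := rfl
  rw [this, Finsupp.mapDomain_notin_range]
  rintro ⟨a, rfl⟩
  exact hy a.2

lemma single_comm_avg' (H : Subgroup J) [Fintype H] {l : J} (hl : l ∈ Subgroup.normalizer (H : Set J)) :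
    MonoidAlgebra.single l (1:ℂ) * algAvg H = algAvg H * MonoidAlgebra.single l (1:ℂ) := by
  rw [algAvg_def', mul_smul_comm, smul_mul_assoc, Finset.mul_sum, Finset.sum_mul]
  congr 1
  have hbij : Function.Bijective (fun h : H =>
      (⟨l * ↑h * l⁻¹, ((Subgroup.mem_normalizer_iff.mp hl) ↑h).mp h.2⟩ : H)) := by
    constructor
    · intro a b hab
      have h1 : l * (↑a : J) * l⁻¹ = l * ↑b * l⁻¹ := congrArg Subtype.val hab
      have : (↑a : J) = ↑b := mul_left_cancel (mul_right_cancel h1)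
      exact Subtype.ext this
    · intro b
      refine ⟨⟨l⁻¹ * ↑b * l, ?_⟩, ?_⟩
      · have := (Subgroup.mem_normalizer_iff.mp (inv_mem hl)) ↑b
        simpa [mul_assoc] using this.mp b.2
      · ext
        simp [mul_assoc]
  refine Fintype.sum_bijective _ hbij _ _ (fun h => ?_)
  rw [of_apply, of_apply, MonoidAlgebra.single_mul_single, MonoidAlgebra.single_mul_single]
  simp [mul_assoc]

lemma algMap_comm_avg' (H L : Subgroup J) [Fintype H] (hLH : L ≤ Subgroup.normalizer (H : Set J))
    (b : MonoidAlgebra ℂ ↥L) : algMap L b * algAvg H = algAvg H * algMap L b := by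
  induction b using MonoidAlgebra.induction_linear with
  | zero => simp
  | add f g hf hg => rw [map_add, add_mul, mul_add, hf, hg]
  | single l c =>
      rw [algMap_single']
      have : MonoidAlgebra.single (↑l : J) c = c • MonoidAlgebra.single (↑l : J) (1:ℂ) := by
        simp
      rw [this, smul_mul_assoc, mul_smul_comm, single_comm_avg' H (hLH l.2)]

lemma mem_ralg_iff' {e : MonoidAlgebra ℂ J} (he : e * e = e) (x : MonoidAlgebra ℂ J) :
    x ∈ ralg J e ↔ x * e = x := by
  constructor
  · rintro ⟨y, rfl⟩
    show y * e * e = y * e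
    rw [mul_assoc, he]
  · intro hx
    exact ⟨x, hx⟩

section KeyPf
variable (U L V : Subgroup J) [Fintype U] [Fintype V]
variable (hinj : ∀ v ∈ V, ∀ l ∈ L, ∀ u ∈ U, ∀ v' ∈ V, ∀ l' ∈ L, ∀ u' ∈ U,
    v * l * u = v' * l' * u' → v = v' ∧ l = l' ∧ u = u')

include hinj in
lemma T_coeff' (z : MonoidAlgebra ℂ ↥L) (l : ↥L) :
    (algAvg V * algMap L z * algAvg U).coeff (↑l : J)
      = ((Nat.card V : ℂ))⁻¹ * ((Nat.card U : ℂ))⁻¹ * z.coeff l := by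
  classical
  have expand : algAvg V * algMap L z * algAvg U
      = (Nat.card V : ℂ)⁻¹ • (Nat.card U : ℂ)⁻¹ •
        ∑ v : V, ∑ u : U, MonoidAlgebra.of ℂ J ↑v * algMap L z * MonoidAlgebra.of ℂ J ↑u := by
    rw [algAvg_def' V, algAvg_def' U]
    simp only [smul_mul_assoc, mul_smul_comm, Finset.sum_mul, Finset.mul_sum]
    rw [smul_comm]
    simp only [← Finset.smul_sum]
    rw [Finset.sum_comm]
  rw [expand]
  simp only [MonoidAlgebra.coeff_smul_apply, MonoidAlgebra.coeff_sum, Finsupp.finset_sum_apply]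
  have hterm : ∀ (v : V) (u : U),
      (MonoidAlgebra.of ℂ J ↑v * algMap L z * MonoidAlgebra.of ℂ J ↑u).coeff (↑l : J)
        = if v = 1 ∧ u = 1 then z.coeff l else 0 := by
    intro v u
    rw [of_apply, of_apply, MonoidAlgebra.mul_single_apply, MonoidAlgebra.single_mul_apply,
      mul_one, one_mul]
    by_cases hmem : (↑v : J)⁻¹ * ((↑l : J) * (↑u : J)⁻¹) ∈ L
    · have heq : (↑v : J) * ((↑v : J)⁻¹ * ((↑l : J) * (↑u : J)⁻¹)) * ↑u = (1:J) * ↑l * 1 := by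
        group
      obtain ⟨hv, hl', hu⟩ := hinj ↑v v.2 _ hmem ↑u u.2 1 (one_mem V) ↑l l.2 1 (one_mem U) heq
      have hv1 : v = 1 := Subtype.ext hv
      have hu1 : u = 1 := Subtype.ext hu
      rw [if_pos ⟨hv1, hu1⟩, algMap_apply_mem' L z hmem]
      congr 1
      exact Subtype.ext hl'
    · rw [algMap_apply_not_mem' L z hmem, if_neg]
      rintro ⟨rfl, rfl⟩
      exact hmem (by simpa using l.2)
  simp only [hterm, ite_and]
  simp [Finset.sum_ite_eq', apply_ite, mul_assoc]

include hinj in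
lemma T_inj' : Function.Injective
    (fun z : MonoidAlgebra ℂ ↥L => algAvg V * algMap L z * algAvg U) := by
  intro z z' h
  ext l
  have h' : algAvg V * algMap L z * algAvg U = algAvg V * algMap L z' * algAvg U := h
  have h1 := T_coeff' U L V hinj z l
  have h2 := T_coeff' U L V hinj z' l
  rw [h'] at h1
  rw [h1] at h2
  have hV : ((Nat.card V : ℂ)) ≠ 0 := by
    simp [Nat.card_eq_fintype_card, Fintype.card_ne_zero]
  have hU : ((Nat.card U : ℂ)) ≠ 0 := by
    simp [Nat.card_eq_fintype_card, Fintype.card_ne_zero]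
  field_simp at h2
  exact h2

variable (hsurj : ∀ j : J, ∃ v ∈ V, ∃ l ∈ L, ∃ u ∈ U, j = v * l * u)

include hsurj in
lemma exists_rep' (x : MonoidAlgebra ℂ J) :
    ∃ z : MonoidAlgebra ℂ ↥L, algAvg V * x * algAvg U = algAvg V * algMap L z * algAvg U := by
  induction x using MonoidAlgebra.induction_linear with
  | zero => exact ⟨0, by simp⟩
  | add f g hf hg =>
      obtain ⟨z1, hz1⟩ := hf
      obtain ⟨z2, hz2⟩ := hg
      exact ⟨z1 + z2, by rw [map_add, mul_add, add_mul, mul_add, add_mul, hz1, hz2]⟩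
  | single j c =>
      obtain ⟨v, hv, l, hl, u, hu, rfl⟩ := hsurj j
      refine ⟨MonoidAlgebra.single ⟨l, hl⟩ c, ?_⟩
      rw [algMap_single']
      have hsplit : (MonoidAlgebra.single (v * l * u) c : MonoidAlgebra ℂ J)
          = MonoidAlgebra.single v (1:ℂ) * MonoidAlgebra.single l c
              * MonoidAlgebra.single u (1:ℂ) := by
        rw [MonoidAlgebra.single_mul_single, MonoidAlgebra.single_mul_single]
        simp
      rw [hsplit]
      rw [← mul_assoc, ← mul_assoc, avg_mul_single' V hv, mul_assoc,
        mul_assoc, single_mul_avg' U hu, ← mul_assoc]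

end KeyPf
end AuxPf


variable {J : Type*} [Group J] [Fintype J]

/-- The space of linear maps `φ : ℂ[J]e_V → ℂ[J]e_U` satisfying `φ(a·x·b) = a·φ(x)·b`
for all `a ∈ ℂ[J]` and `b ∈ ℂ[L]`. -/
def bimodHoms (U L V : Subgroup J) :
    Submodule ℂ (↥(ralg J (algAvg V)) →ₗ[ℂ] ↥(ralg J (algAvg U))) where
  carrier := {φ | ∀ (a : MonoidAlgebra ℂ J) (b : MonoidAlgebra ℂ ↥L)
    (x : ↥(ralg J (algAvg V))) (h : a * (x : MonoidAlgebra ℂ J) * algMap L b ∈ ralg J (algAvg V)),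
    (↑(φ ⟨a * (x : MonoidAlgebra ℂ J) * algMap L b, h⟩) : MonoidAlgebra ℂ J) = a * ↑(φ x) * algMap L b}
  add_mem' := by
    intro φ ψ hφ hψ a b x h
    simp [hφ a b x h, hψ a b x h, mul_add, add_mul]
  zero_mem' := by intro a b x h; simp
  smul_mem' := by
    intro c φ hφ a b x h
    simp [hφ a b x h, mul_smul_comm, smul_mul_assoc]

/-- Let `J = ULV` be a finite group with an Iwahori decomposition.  The map
`Φ : Z(ℂ[L]) → Hom_{ℂ[J],ℂ[L]}(ℂ[J]e_V, ℂ[J]e_U)`, `Φ(z) : x ↦ x·e_U·z`, is a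
ℂ-linear isomorphism. -/
theorem center_linearEquiv_bimodHoms (U L V : Subgroup J)
    (hIw : IwahoriDecomp (⊤ : Subgroup J) U L V) :
    ∃ Φ : ↥(Subalgebra.center ℂ (MonoidAlgebra ℂ ↥L)) ≃ₗ[ℂ] ↥(bimodHoms U L V),
      ∀ (z : ↥(Subalgebra.center ℂ (MonoidAlgebra ℂ ↥L))) (x : ↥(ralg J (algAvg V))),
        ((↑(Φ z) : ↥(ralg J (algAvg V)) →ₗ[ℂ] ↥(ralg J (algAvg U))) x : MonoidAlgebra ℂ J)
          = ↑x * algAvg U * algMap L ↑z := by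
  classical
  letI : Fintype ↥U := Fintype.ofFinite _
  letI : Fintype ↥V := Fintype.ofFinite _
  obtain ⟨hLU, hLV, hbij⟩ := hIw
  -- VLU injectivity
  have hinj : ∀ v ∈ V, ∀ l ∈ L, ∀ u ∈ U, ∀ v' ∈ V, ∀ l' ∈ L, ∀ u' ∈ U,
      v * l * u = v' * l' * u' → v = v' ∧ l = l' ∧ u = u' := by
    intro v hv l hl u hu v' hv' l' hl' u' hu' heq
    have h1 : ((u⁻¹, l⁻¹, v⁻¹) : J × J × J) ∈ (U : Set J) ×ˢ (L : Set J) ×ˢ (V : Set J) :=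
      ⟨inv_mem hu, inv_mem hl, inv_mem hv⟩
    have h2 : ((u'⁻¹, l'⁻¹, v'⁻¹) : J × J × J) ∈ (U : Set J) ×ˢ (L : Set J) ×ˢ (V : Set J) :=
      ⟨inv_mem hu', inv_mem hl', inv_mem hv'⟩
    have h3 : u⁻¹ * l⁻¹ * v⁻¹ = u'⁻¹ * l'⁻¹ * v'⁻¹ := by
      have := congrArg (fun x => x⁻¹) heq
      simpa [mul_assoc] using this
    have := hbij.2.1 h1 h2 h3
    rw [Prod.ext_iff, Prod.ext_iff] at this
    obtain ⟨e1, e2, e3⟩ := this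
    exact ⟨inv_injective e3, inv_injective e2, inv_injective e1⟩
  -- VLU surjectivity
  have hsurj : ∀ j : J, ∃ v ∈ V, ∃ l ∈ L, ∃ u ∈ U, j = v * l * u := by
    intro j
    have : j⁻¹ ∈ (⊤ : Subgroup J) := trivial
    obtain ⟨⟨u, l, v⟩, ⟨hu, hl, hv⟩, hq⟩ := hbij.2.2 (show j⁻¹ ∈ ((⊤ : Subgroup J) : Set J) from trivial)
    refine ⟨v⁻¹, inv_mem hv, l⁻¹, inv_mem hl, u⁻¹, inv_mem hu, ?_⟩
    have : u * l * v = j⁻¹ := hq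
    have := congrArg (fun x => x⁻¹) this
    simpa [mul_assoc] using this.symm
  have heU : algAvg U * algAvg U = algAvg U := avg_idem' U
  have heV : algAvg V * algAvg V = algAvg V := avg_idem' V
  have hcU : ∀ b : MonoidAlgebra ℂ ↥L, algMap L b * algAvg U = algAvg U * algMap L b :=
    algMap_comm_avg' U L hLU
  have hcV : ∀ b : MonoidAlgebra ℂ ↥L, algMap L b * algAvg V = algAvg V * algMap L b :=
    algMap_comm_avg' V L hLV
  have hmemU := mem_ralg_iff' (J := J) heU
  have hmemV := mem_ralg_iff' (J := J) heV
  have hTinj := T_inj' U L V hinj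
  have hrep := exists_rep' U L V hsurj
  -- the map z ↦ (x ↦ x * e_U * algMap z), for arbitrary z
  have hmapsto : ∀ (z : MonoidAlgebra ℂ ↥L) (x : MonoidAlgebra ℂ J),
      x * algAvg U * algMap L z ∈ ralg J (algAvg U) := by
    intro z x
    refine ⟨x * algMap L z, ?_⟩
    show x * algMap L z * algAvg U = x * algAvg U * algMap L z
    rw [mul_assoc, hcU, ← mul_assoc]
  let F : MonoidAlgebra ℂ ↥L → (↥(ralg J (algAvg V)) →ₗ[ℂ] ↥(ralg J (algAvg U))) :=
    fun z =>
      { toFun := fun x => ⟨(↑x : MonoidAlgebra ℂ J) * algAvg U * algMap L z, hmapsto z ↑x⟩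
        map_add' := fun x y => Subtype.ext (by
          show ((↑x + ↑y : MonoidAlgebra ℂ J)) * algAvg U * algMap L z = _
          rw [add_mul, add_mul]
          rfl)
        map_smul' := fun c x => Subtype.ext (by
          show ((c • ↑x : MonoidAlgebra ℂ J)) * algAvg U * algMap L z = _
          rw [smul_mul_assoc, smul_mul_assoc]
          rfl) }
  have hF : ∀ z : ↥(Subalgebra.center ℂ (MonoidAlgebra ℂ ↥L)), F ↑z ∈ bimodHoms U L V := by
    intro z
    intro a b x h
    show a * ↑x * algMap L b * algAvg U * algMap L ↑z
      = a * (↑x * algAvg U * algMap L ↑z) * algMap L b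
    have hzb : algMap L ↑z * algMap L b = algMap L b * algMap L ↑z := by
      rw [← map_mul, ← map_mul, (Subalgebra.mem_center_iff.mp z.2 b)]
    have hkey : algMap L b * (algAvg U * algMap L ↑z)
        = algAvg U * (algMap L ↑z * algMap L b) := by
      rw [← mul_assoc, hcU b, mul_assoc, hzb]
    simp only [mul_assoc]
    rw [hkey]
  let Φ₀ : ↥(Subalgebra.center ℂ (MonoidAlgebra ℂ ↥L)) →ₗ[ℂ] ↥(bimodHoms U L V) :=
    { toFun := fun z => ⟨F ↑z, hF z⟩
      map_add' := fun z z' => Subtype.ext (LinearMap.ext (fun x => Subtype.ext (by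
        show (↑x : MonoidAlgebra ℂ J) * algAvg U * algMap L (↑z + ↑z') = _
        rw [map_add, mul_add]
        rfl)))
      map_smul' := fun c z => Subtype.ext (LinearMap.ext (fun x => Subtype.ext (by
        show (↑x : MonoidAlgebra ℂ J) * algAvg U * algMap L (c • ↑z) = _
        rw [map_smul, mul_smul_comm]
        rfl))) }
  -- the distinguished element e_V of ℂ[J]e_V
  have heVmem : algAvg V ∈ ralg J (algAvg V) := (hmemV _).mpr heV
  set xV : ↥(ralg J (algAvg V)) := ⟨algAvg V, heVmem⟩ with hxV
  -- injectivity
  have hinjΦ : Function.Injective Φ₀ := by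
    intro z z' hzz
    have h1 : (↑(Φ₀ z) : ↥(ralg J (algAvg V)) →ₗ[ℂ] ↥(ralg J (algAvg U))) xV
        = (↑(Φ₀ z') : ↥(ralg J (algAvg V)) →ₗ[ℂ] ↥(ralg J (algAvg U))) xV := by rw [hzz]
    have h2 : algAvg V * algAvg U * algMap L ↑z = algAvg V * algAvg U * algMap L ↑z' :=
      congrArg Subtype.val h1
    have key : ∀ w : MonoidAlgebra ℂ ↥L,
        algAvg V * algAvg U * algMap L w = algAvg V * algMap L w * algAvg U := by
      intro w
      rw [mul_assoc, mul_assoc, hcU]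
    rw [key, key] at h2
    exact Subtype.ext (hTinj h2)
  -- surjectivity
  have hsurjΦ : Function.Surjective Φ₀ := by
    rintro ⟨φ, hφ⟩
    have hP : ∀ (a : MonoidAlgebra ℂ J) (b : MonoidAlgebra ℂ ↥L)
        (x : ↥(ralg J (algAvg V))) (h : a * (x : MonoidAlgebra ℂ J) * algMap L b ∈ ralg J (algAvg V)),
        (↑(φ ⟨a * (x : MonoidAlgebra ℂ J) * algMap L b, h⟩) : MonoidAlgebra ℂ J) = a * ↑(φ x) * algMap L b := hφ
    set m : MonoidAlgebra ℂ J := ↑(φ xV) with hm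
    have hmU : m * algAvg U = m := (hmemU _).mp (φ xV).2
    have hmV : algAvg V * m = m := by
      have harg : algAvg V * (xV : MonoidAlgebra ℂ J) * algMap L 1 ∈ ralg J (algAvg V) := by
        rw [map_one, mul_one]
        show algAvg V * algAvg V ∈ _
        rw [heV]; exact heVmem
      have h5 := hP (algAvg V) 1 xV harg
      have hargeq : (⟨algAvg V * (xV : MonoidAlgebra ℂ J) * algMap L 1, harg⟩ : ↥(ralg J (algAvg V))) = xV :=
        Subtype.ext (by
          show algAvg V * algAvg V * algMap L 1 = algAvg V
          rw [map_one, mul_one, heV])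
      rw [hargeq, map_one, mul_one] at h5
      exact h5.symm
    have hmB : ∀ b : MonoidAlgebra ℂ ↥L, algMap L b * m = m * algMap L b := by
      intro b
      have harg1 : (1 : MonoidAlgebra ℂ J) * (xV : MonoidAlgebra ℂ J) * algMap L b ∈ ralg J (algAvg V) := by
        rw [one_mul]
        show algAvg V * algMap L b ∈ _
        rw [← hcV b]
        exact ⟨algMap L b, rfl⟩
      have harg2 : algMap L b * (xV : MonoidAlgebra ℂ J) * algMap L 1 ∈ ralg J (algAvg V) := by
        rw [map_one, mul_one]
        show algMap L b * algAvg V ∈ _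
        exact ⟨algMap L b, rfl⟩
      have h6 := hP 1 b xV harg1
      have h7 := hP (algMap L b) 1 xV harg2
      have hargeq : (⟨(1 : MonoidAlgebra ℂ J) * (xV : MonoidAlgebra ℂ J) * algMap L b, harg1⟩ : ↥(ralg J (algAvg V)))
          = ⟨algMap L b * (xV : MonoidAlgebra ℂ J) * algMap L 1, harg2⟩ :=
        Subtype.ext (by
          show (1 : MonoidAlgebra ℂ J) * algAvg V * algMap L b = algMap L b * algAvg V * algMap L 1
          rw [map_one, mul_one, one_mul, hcV b])
      rw [hargeq] at h6
      rw [h7] at h6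
      rw [map_one, mul_one, one_mul] at h6
      exact h6
    have hm2 : algAvg V * m * algAvg U = m := by rw [hmV]; exact hmU
    obtain ⟨z₀, hz₀⟩ := hrep m
    have hmz : m = algAvg V * algMap L z₀ * algAvg U := by rw [← hz₀, hm2]
    have hz₀c : z₀ ∈ Subalgebra.center ℂ (MonoidAlgebra ℂ ↥L) := by
      rw [Subalgebra.mem_center_iff]
      intro b
      apply hTinj
      show algAvg V * algMap L (b * z₀) * algAvg U = algAvg V * algMap L (z₀ * b) * algAvg U
      have e1 : algAvg V * algMap L (b * z₀) * algAvg U = algMap L b * m := by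
        rw [map_mul, hmz]
        rw [← mul_assoc, ← hcV b]
        simp only [mul_assoc]
      have e2 : algAvg V * algMap L (z₀ * b) * algAvg U = m * algMap L b := by
        rw [map_mul, hmz]
        rw [← mul_assoc]
        rw [mul_assoc (algAvg V * algMap L z₀), hcU b]
        rw [← mul_assoc]
      rw [e1, e2, hmB b]
    refine ⟨⟨z₀, hz₀c⟩, ?_⟩
    apply Subtype.ext
    apply LinearMap.ext
    intro x
    apply Subtype.ext
    show (↑x : MonoidAlgebra ℂ J) * algAvg U * algMap L z₀ = ↑(φ x)
    have hx : (↑x : MonoidAlgebra ℂ J) * algAvg V = ↑x := (hmemV _).mp x.2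
    have harg : (↑x : MonoidAlgebra ℂ J) * (xV : MonoidAlgebra ℂ J) * algMap L 1 ∈ ralg J (algAvg V) := by
      rw [map_one, mul_one]
      show (↑x : MonoidAlgebra ℂ J) * algAvg V ∈ _
      exact ⟨↑x, rfl⟩
    have h8 := hP ↑x 1 xV harg
    have hargeq : (⟨(↑x : MonoidAlgebra ℂ J) * (xV : MonoidAlgebra ℂ J) * algMap L 1, harg⟩
        : ↥(ralg J (algAvg V))) = x :=
      Subtype.ext (by
        show (↑x : MonoidAlgebra ℂ J) * algAvg V * algMap L 1 = ↑x
        rw [map_one, mul_one, hx])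
    rw [hargeq, map_one, mul_one] at h8
    rw [h8, ← hm, hmz]
    have hfin : (↑x : MonoidAlgebra ℂ J) * (algAvg V * algMap L z₀ * algAvg U)
        = ↑x * algAvg U * algMap L z₀ := by
      rw [← mul_assoc, ← mul_assoc, hx, mul_assoc, hcU z₀, ← mul_assoc]
    rw [hfin]
  exact ⟨LinearEquiv.ofBijective Φ₀ ⟨hinjΦ, hsurjΦ⟩, fun z x => rfl⟩

end Statement2


end Parahoric
end
end

section
/- Let ρ be an irreducible ℂ[L]-module. Then the ℂ[J]-module i_{U,V}ρ is irreducible; it occurs with multiplicity exactly one in each of i_U ρ and i_V ρ; and every irreducible ℂ[J]-module occurring with nonzero multiplicity in both i_U ρ and i_V ρ is isomorphic to i_{U,V}ρ. -/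
open scoped BigOperators

set_option maxHeartbeats 1000000
set_option synthInstance.maxHeartbeats 1000000

noncomputable section

namespace Parahoric

variable {G : Type*} [Group G]

set_option linter.unusedSectionVars false
set_option linter.unusedVariables false

section Aux

variable {J : Type*} [Group J] [Fintype J]
variable {W : Type*} [AddCommGroup W] [Module ℂ W]

lemma mem_indInfl {X L : Subgroup J} {ρ : Representation ℂ ↥L W} {f : J → W} :
    f ∈ indInfl X L ρ ↔
      ∀ (u l g : J) (hu : u ∈ X) (hl : l ∈ L), f (u * l * g) = ρ ⟨l, hl⟩ (f g) :=
  Iff.rfl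

lemma mem_homSubSub {W₁ W₂ : Type*} [AddCommGroup W₁] [Module ℂ W₁]
    [AddCommGroup W₂] [Module ℂ W₂]
    {σ : Representation ℂ J W₁} {S : Submodule ℂ W₁}
    {τ : Representation ℂ J W₂} {T : Submodule ℂ W₂} {φ : ↥S →ₗ[ℂ] ↥T} :
    φ ∈ homSubSub σ S τ T ↔
      ∀ (g : J) (x : ↥S) (hx : σ g ↑x ∈ S), (φ ⟨σ g ↑x, hx⟩ : W₂) = τ g ↑(φ x) :=
  Iff.rfl

lemma mem_homFullSub {W₁ W₂ : Type*} [AddCommGroup W₁] [Module ℂ W₁]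
    [AddCommGroup W₂] [Module ℂ W₂]
    {π : Representation ℂ J W₁} {τ : Representation ℂ J W₂} {T : Submodule ℂ W₂}
    {φ : W₁ →ₗ[ℂ] ↥T} :
    φ ∈ homFullSub π τ T ↔
      ∀ (g : J) (x : W₁), (φ (π g x) : W₂) = τ g ↑(φ x) :=
  Iff.rfl

lemma rtRep_apply (g : J) (f : J → W) (x : J) : rtRep J W g f x = f (x * g) := rfl

lemma avgL_apply (X : Subgroup J) [Fintype ↥X] (f : J → W) (g : J) :
    avgL X W f g = (Nat.card ↥X : ℂ)⁻¹ • ∑ x : ↥X, f (↑x * g) := by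
  unfold avgL
  simp only [LinearMap.smul_apply, Pi.smul_apply, LinearMap.coe_sum, Finset.sum_apply]
  congr 1
  rw [Subsingleton.elim (Fintype.ofFinite ↥X) ‹Fintype ↥X›]
  rfl

lemma stable_indInfl (X L : Subgroup J) (ρ : Representation ℂ ↥L W) :
    Stable (rtRep J W) (indInfl X L ρ) := by
  intro g f hf
  rw [mem_indInfl] at hf ⊢
  intro u l h hu hl
  have := hf u l (h * g) hu hl
  simpa [rtRep_apply, mul_assoc] using this

lemma avgL_rt_comm (X : Subgroup J) (g : J) (f : J → W) :
    avgL X W (rtRep J W g f) = rtRep J W g (avgL X W f) := by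
  letI : Fintype ↥X := Fintype.ofFinite ↥X
  funext h
  rw [show rtRep J W g (avgL X W f) h = avgL X W f (h * g) from rfl, avgL_apply, avgL_apply]
  simp only [rtRep_apply, mul_assoc]

lemma exists_equivariant_proj {M : Type*} [AddCommGroup M] [Module ℂ M]
    (σ : Representation ℂ J M) (N : Submodule ℂ M) (hN : Stable σ N) :
    ∃ p : M →ₗ[ℂ] M, (∀ x, p x ∈ N) ∧ (∀ x ∈ N, p x = x) ∧
      ∀ (g : J) (x : M), p (σ g x) = σ g (p x) := by
  obtain ⟨C, hC⟩ := Submodule.exists_isCompl N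
  set p₀ : M →ₗ[ℂ] M := N.subtype ∘ₗ N.projectionOnto C hC with hp₀
  have hp₀mem : ∀ x, p₀ x ∈ N := fun x => (N.projectionOnto C hC x).2
  have hp₀id : ∀ x ∈ N, p₀ x = x := fun x hx => by
    simp only [hp₀, LinearMap.comp_apply, Submodule.projectionOnto_apply_left hC ⟨x, hx⟩,
      Submodule.subtype_apply]
  have hσσ : ∀ (g : J) (x : M), σ g (σ g⁻¹ x) = x := fun g x => by
    rw [← Module.End.mul_apply, ← map_mul, mul_inv_cancel, map_one, Module.End.one_apply]
  refine ⟨(Fintype.card J : ℂ)⁻¹ • ∑ g : J, σ g ∘ₗ p₀ ∘ₗ σ g⁻¹, ?_, ?_, ?_⟩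
  · intro x
    simp only [LinearMap.smul_apply, LinearMap.coe_sum, Finset.sum_apply,
      LinearMap.comp_apply]
    exact Submodule.smul_mem _ _ (Submodule.sum_mem _ fun g _ => hN g _ (hp₀mem _))
  · intro x hx
    simp only [LinearMap.smul_apply, LinearMap.coe_sum, Finset.sum_apply,
      LinearMap.comp_apply]
    have : ∀ g : J, σ g (p₀ (σ g⁻¹ x)) = x := fun g => by
      rw [hp₀id _ (hN g⁻¹ x hx), hσσ]
    rw [Finset.sum_congr rfl fun g _ => this g, Finset.sum_const, Finset.card_univ,
      ← Nat.cast_smul_eq_nsmul ℂ, smul_smul, inv_mul_cancel₀, one_smul]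
    exact Nat.cast_ne_zero.mpr Fintype.card_ne_zero
  · intro h x
    simp only [LinearMap.smul_apply, LinearMap.coe_sum, Finset.sum_apply,
      LinearMap.comp_apply, map_smul, map_sum]
    congr 1
    refine Fintype.sum_equiv (Equiv.mulLeft h⁻¹) _ _ fun k => ?_
    simp only [Equiv.coe_mulLeft]
    have e1 : σ k⁻¹ (σ h x) = σ (k⁻¹ * h) x := by
      rw [← Module.End.mul_apply, ← map_mul]
    have e2 : ((h⁻¹ * k)⁻¹ : J) = k⁻¹ * h := by group
    have e3 : σ h (σ (h⁻¹ * k) (p₀ (σ (k⁻¹ * h) x))) = σ k (p₀ (σ (k⁻¹ * h) x)) := by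
      rw [← Module.End.mul_apply, ← map_mul, mul_inv_cancel_left]
    rw [e1, e2, e3]

lemma schur_scalar {L : Subgroup J} (ρ : Representation ℂ ↥L W) [FiniteDimensional ℂ W]
    (hρ : IsIrreducible ρ) (β : W →ₗ[ℂ] W)
    (hβ : ∀ (l : ↥L) (w : W), β (ρ l w) = ρ l (β w)) :
    ∃ c : ℂ, ∀ w, β w = c • w := by
  obtain ⟨x, -, hx⟩ := (Submodule.ne_bot_iff _).mp hρ.1
  haveI : Nontrivial W := nontrivial_of_ne x 0 hx
  obtain ⟨c, hc⟩ := Module.End.exists_eigenvalue β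
  have hst : Stable ρ (Module.End.eigenspace β c) := by
    intro l w hw
    rw [Module.End.mem_eigenspace_iff] at hw ⊢
    rw [hβ, hw, map_smul]
  rcases hρ.2 _ hst with h | h
  · exact absurd h hc
  · exact ⟨c, fun w => Module.End.mem_eigenspace_iff.mp
      (h ▸ Submodule.mem_top : w ∈ Module.End.eigenspace β c)⟩

lemma exists_dec (Y L X : Subgroup J)
    (hex : ∀ g : J, ∃ y l x : J, y ∈ Y ∧ l ∈ L ∧ x ∈ X ∧ y * l * x = g)
    (huniq : ∀ y l x y' l' x' : J, y ∈ Y → l ∈ L → x ∈ X → y' ∈ Y → l' ∈ L → x' ∈ X →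
      y * l * x = y' * l' * x' → y = y' ∧ l = l' ∧ x = x') :
    ∃ yf lf xf : J → J, (∀ g, yf g ∈ Y) ∧ (∀ g, lf g ∈ L) ∧ (∀ g, xf g ∈ X) ∧
      (∀ g, yf g * lf g * xf g = g) ∧
      (∀ (g y l x : J), y ∈ Y → l ∈ L → x ∈ X → y * l * x = g →
        yf g = y ∧ lf g = l ∧ xf g = x) := by
  have hex' : ∀ g : J, ∃ y : J, ∃ l : J, ∃ x : J,
      (y ∈ Y ∧ l ∈ L ∧ x ∈ X) ∧ y * l * x = g := by
    intro g; obtain ⟨y, l, x, h1, h2, h3, h4⟩ := hex g; exact ⟨y, l, x, ⟨h1, h2, h3⟩, h4⟩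
  choose yf lf xf hmem hmul using hex'
  refine ⟨yf, lf, xf, fun g => (hmem g).1, fun g => (hmem g).2.1, fun g => (hmem g).2.2,
    hmul, ?_⟩
  intro g y l x hy hl hx hprod
  exact huniq _ _ _ _ _ _ (hmem g).1 (hmem g).2.1 (hmem g).2.2 hy hl hx
    (by rw [hmul g, ← hprod])

end Aux



section Aux2
set_option linter.unusedSectionVars false
set_option linter.unusedVariables false

variable {J : Type*} [Group J] [Fintype J]
variable {W : Type*} [AddCommGroup W] [Module ℂ W]

lemma exists_fW (Y L X : Subgroup J) (ρ : Representation ℂ ↥L W)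
    (hYn : ∀ l ∈ L, ∀ y ∈ Y, l * y * l⁻¹ ∈ Y)
    (hex : ∀ g : J, ∃ y l x : J, y ∈ Y ∧ l ∈ L ∧ x ∈ X ∧ y * l * x = g)
    (huniq : ∀ y l x y' l' x' : J, y ∈ Y → l ∈ L → x ∈ X → y' ∈ Y → l' ∈ L → x' ∈ X →
      y * l * x = y' * l' * x' → y = y' ∧ l = l' ∧ x = x') :
    ∃ F : W →ₗ[ℂ] (J → W), (∀ w, F w ∈ indInfl Y L ρ) ∧ (∀ w, ∀ x ∈ X, F w x = w) := by
  obtain ⟨yf, lf, xf, hy, hl, hx, hmul, hu⟩ := exists_dec Y L X hex huniq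
  refine ⟨{ toFun := fun w => fun g => ρ ⟨lf g, hl g⟩ w,
            map_add' := fun a b => by funext g; simp,
            map_smul' := fun c a => by funext g; simp }, ?_, ?_⟩
  · intro w
    rw [mem_indInfl]
    intro u l g hu' hl'
    have hdec : lf (u * l * g) = l * lf g := by
      have h1 : (u * (l * yf g * l⁻¹)) * (l * lf g) * xf g = u * l * g := by
        conv_rhs => rw [← hmul g]
        group
      exact (hu (u * l * g) _ _ _ (Y.mul_mem hu' (hYn l hl' (yf g) (hy g)))
        (L.mul_mem hl' (hl g)) (hx g) h1).2.1
    show ρ ⟨lf (u * l * g), hl _⟩ w = ρ ⟨l, hl'⟩ (ρ ⟨lf g, hl g⟩ w)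
    have hsub : (⟨lf (u * l * g), hl _⟩ : ↥L) = ⟨l, hl'⟩ * ⟨lf g, hl g⟩ :=
      Subtype.ext (by simpa using hdec)
    rw [hsub, map_mul, Module.End.mul_apply]
  · intro w x hx'
    have h1 : lf x = 1 := (hu x 1 1 x Y.one_mem L.one_mem hx' (by group)).2.1
    show ρ ⟨lf x, hl x⟩ w = w
    have hsub : (⟨lf x, hl x⟩ : ↥L) = 1 := Subtype.ext (by simpa using h1)
    rw [hsub, map_one, Module.End.one_apply]

lemma avgL_mem_indInfl (X L : Subgroup J) (ρ : Representation ℂ ↥L W)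
    (hXn : ∀ l ∈ L, ∀ x ∈ X, l * x * l⁻¹ ∈ X)
    (f : J → W) (hfL : ∀ (l g : J) (hl : l ∈ L), f (l * g) = ρ ⟨l, hl⟩ (f g)) :
    avgL X W f ∈ indInfl X L ρ := by
  letI : Fintype ↥X := Fintype.ofFinite ↥X
  rw [mem_indInfl]
  intro x₀ l g hx₀ hl
  rw [avgL_apply, avgL_apply, map_smul]
  congr 1
  calc ∑ x : ↥X, f (↑x * (x₀ * l * g))
      = ∑ x : ↥X, f (↑x * (l * g)) := by
        refine Fintype.sum_equiv (Equiv.mulRight (⟨x₀, hx₀⟩ : ↥X)) _ _ fun x => ?_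
        simp only [Equiv.coe_mulRight]
        congr 1
        simp [mul_assoc]
    _ = ∑ x : ↥X, ρ ⟨l, hl⟩ (f ((l⁻¹ * ↑x * l) * g)) := by
        refine Finset.sum_congr rfl fun x _ => ?_
        rw [← hfL l ((l⁻¹ * ↑x * l) * g) hl]
        congr 1
        group
    _ = ρ ⟨l, hl⟩ (∑ x : ↥X, f (↑x * g)) := by
        rw [map_sum]
        have hmem1 : ∀ x : ↥X, l⁻¹ * ↑x * l ∈ X := fun x => by
          simpa using hXn l⁻¹ (L.inv_mem hl) ↑x x.2
        exact Fintype.sum_equiv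
          ⟨fun x => ⟨l⁻¹ * ↑x * l, hmem1 x⟩, fun x => ⟨l * ↑x * l⁻¹, hXn l hl ↑x x.2⟩,
           fun x => Subtype.ext (by group), fun x => Subtype.ext (by group)⟩ _ _
          fun x => rfl

lemma hom_span (X Y L : Subgroup J) (ρ : Representation ℂ ↥L W) [FiniteDimensional ℂ W]
    (hρ : IsIrreducible ρ)
    (hXn : ∀ l ∈ L, ∀ x ∈ X, l * x * l⁻¹ ∈ X)
    (hYn : ∀ l ∈ L, ∀ y ∈ Y, l * y * l⁻¹ ∈ Y)
    (hex : ∀ g : J, ∃ y l x : J, y ∈ Y ∧ l ∈ L ∧ x ∈ X ∧ y * l * x = g)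
    (huniq : ∀ y l x y' l' x' : J, y ∈ Y → l ∈ L → x ∈ X → y' ∈ Y → l' ∈ L → x' ∈ X →
      y * l * x = y' * l' * x' → y = y' ∧ l = l' ∧ x = x')
    (hmemT : ∀ f ∈ indInfl Y L ρ, avgL X W f ∈ indInfl X L ρ) :
    homSubSub (rtRep J W) (indInfl Y L ρ) (rtRep J W) (indInfl X L ρ) =
      Submodule.span ℂ {(avgL X W).restrict hmemT} := by
  letI : Fintype ↥X := Fintype.ofFinite ↥X
  have hstB := stable_indInfl Y L ρ (W := W)
  have hcard : (Nat.card ↥X : ℂ) ≠ 0 := by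
    have : 0 < Nat.card ↥X := Nat.card_pos
    exact_mod_cast this.ne'
  apply le_antisymm
  · intro φ hφ
    rw [mem_homSubSub] at hφ
    rw [Submodule.mem_span_singleton]
    obtain ⟨yf, lf, xf, hy, hl, hx, hmul, hu⟩ := exists_dec Y L X hex huniq
    obtain ⟨F, hFB, hFX⟩ := exists_fW Y L X ρ hYn hex huniq
    have hFg : ∀ (w : W) (g : J), F w g = ρ ⟨lf g, hl g⟩ w := by
      intro w g
      conv_lhs => rw [← hmul g]
      rw [mem_indInfl.mp (hFB w) (yf g) (lf g) (xf g) (hy g) (hl g), hFX w (xf g) (hx g)]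
    have hlr : ∀ (g l₀ : J), l₀ ∈ L → lf (g * l₀) = lf g * l₀ := by
      intro g l₀ hl₀
      refine (hu (g * l₀) (yf g) (lf g * l₀) (l₀⁻¹ * xf g * l₀) (hy g)
        (L.mul_mem (hl g) hl₀) ?_ ?_).2.1
      · simpa using hXn l₀⁻¹ (L.inv_mem hl₀) (xf g) (hx g)
      · conv_rhs => rw [← hmul g]
        group
    let Fb : W →ₗ[ℂ] ↥(indInfl Y L ρ) := LinearMap.codRestrict _ F hFB
    let α : ↥(indInfl Y L ρ) →ₗ[ℂ] W :=
      (LinearMap.proj (1 : J)) ∘ₗ ((indInfl X L ρ).subtype ∘ₗ φ)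
    let β : W →ₗ[ℂ] W := α ∘ₗ Fb
    have hA2 : ∀ (a : ↥(indInfl X L ρ)) (l₀ : J) (hl₀ : l₀ ∈ L),
        (a : J → W) l₀ = ρ ⟨l₀, hl₀⟩ ((a : J → W) 1) := by
      intro a l₀ hl₀
      have := mem_indInfl.mp a.2 1 l₀ 1 X.one_mem hl₀
      simpa using this
    have hA1 : ∀ (a : ↥(indInfl X L ρ)) (x₀ : J), x₀ ∈ X →
        (a : J → W) x₀ = (a : J → W) 1 := by
      intro a x₀ hx₀
      have := mem_indInfl.mp a.2 x₀ 1 1 hx₀ L.one_mem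
      have h0 : ((⟨(1 : J), L.one_mem⟩ : ↥L)) = 1 := rfl
      simpa [h0] using this
    have hval : ∀ (f : ↥(indInfl Y L ρ)) (g : J),
        (φ f : J → W) g = (φ ⟨rtRep J W g ↑f, hstB g ↑f f.2⟩ : J → W) 1 := by
      intro f g
      rw [hφ g f (hstB g ↑f f.2)]
      show (φ f : J → W) g = (φ f : J → W) (1 * g)
      rw [one_mul]
    have hFequi : ∀ (l₀ : ↥L) (w : W), F (ρ l₀ w) = rtRep J W ↑l₀ (F w) := by
      intro l₀ w
      funext g
      rw [hFg, rtRep_apply, hFg]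
      have h1 : lf (g * ↑l₀) = lf g * ↑l₀ := hlr g ↑l₀ l₀.2
      have hsub : (⟨lf (g * ↑l₀), hl (g * ↑l₀)⟩ : ↥L) = ⟨lf g, hl g⟩ * l₀ :=
        Subtype.ext (by simpa using h1)
      rw [hsub, map_mul, Module.End.mul_apply]
    have hβcomm : ∀ (l₀ : ↥L) (w : W), β (ρ l₀ w) = ρ l₀ (β w) := by
      intro l₀ w
      show α (Fb (ρ l₀ w)) = ρ l₀ (α (Fb w))
      have h1 : Fb (ρ l₀ w)
          = ⟨rtRep J W ↑l₀ ↑(Fb w), hstB ↑l₀ ↑(Fb w) (Fb w).2⟩ :=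
        Subtype.ext (hFequi l₀ w)
      rw [h1]
      show (φ ⟨rtRep J W ↑l₀ ↑(Fb w), hstB ↑l₀ ↑(Fb w) (Fb w).2⟩ : J → W) 1
        = ρ l₀ ((φ (Fb w) : J → W) 1)
      rw [hφ ↑l₀ (Fb w) (hstB ↑l₀ ↑(Fb w) (Fb w).2)]
      rw [show (rtRep J W ↑l₀ ↑(φ (Fb w)) : J → W) 1 = (φ (Fb w) : J → W) (1 * ↑l₀)
        from rfl, one_mul]
      exact hA2 (φ (Fb w)) ↑l₀ l₀.2
    obtain ⟨c, hc⟩ := schur_scalar ρ hρ β hβcomm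
    refine ⟨c, ?_⟩
    have hsum : ∀ (f' : ↥(indInfl Y L ρ)), (φ f' : J → W) 1
        = β ((Nat.card ↥X : ℂ)⁻¹ • ∑ x : ↥X, (f' : J → W) ↑x) := by
      intro f'
      have h1 : ∀ x₀ : ↥X, (φ f' : J → W) 1
          = α ⟨rtRep J W ↑x₀ ↑f', hstB ↑x₀ ↑f' f'.2⟩ := by
        intro x₀
        have h2 := hval f' ↑x₀
        rw [hA1 (φ f') ↑x₀ x₀.2] at h2
        exact h2
      have h2 : Fb ((Nat.card ↥X : ℂ)⁻¹ • ∑ x : ↥X, (f' : J → W) ↑x)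
          = (Nat.card ↥X : ℂ)⁻¹ • ∑ x₀ : ↥X,
            (⟨rtRep J W ↑x₀ ↑f', hstB ↑x₀ ↑f' f'.2⟩ : ↥(indInfl Y L ρ)) := by
        apply Subtype.ext
        simp only [SetLike.val_smul, AddSubmonoidClass.coe_finset_sum]
        funext g'
        simp only [Pi.smul_apply, Finset.sum_apply, rtRep_apply]
        show F ((Nat.card ↥X : ℂ)⁻¹ • ∑ x : ↥X, (f' : J → W) ↑x) g' = _
        rw [hFg, map_smul]
        congr 1
        rw [map_sum]
        symm
        refine Fintype.sum_equiv (Equiv.mulLeft (⟨xf g', hx g'⟩ : ↥X)) _ _ fun x₀ => ?_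
        simp only [Equiv.coe_mulLeft]
        have h3 := mem_indInfl.mp f'.2 (yf g') (lf g') (xf g' * ↑x₀) (hy g') (hl g')
        calc (f' : J → W) (g' * ↑x₀)
            = (f' : J → W) (yf g' * lf g' * (xf g' * ↑x₀)) := by
              conv_lhs => rw [← hmul g']
              congr 1
              group
          _ = ρ ⟨lf g', hl g'⟩ ((f' : J → W) (xf g' * ↑x₀)) := h3
          _ = ρ ⟨lf g', hl g'⟩ ((f' : J → W) ↑((⟨xf g', hx g'⟩ : ↥X) * x₀)) := by
              congr 1
      calc (φ f' : J → W) 1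
          = (Nat.card ↥X : ℂ)⁻¹ • ∑ x₀ : ↥X, (φ f' : J → W) 1 := by
            rw [Finset.sum_const, Finset.card_univ, ← Nat.cast_smul_eq_nsmul ℂ, smul_smul,
              Nat.card_eq_fintype_card, inv_mul_cancel₀, one_smul]
            rw [← Nat.card_eq_fintype_card]
            exact hcard
        _ = (Nat.card ↥X : ℂ)⁻¹ • ∑ x₀ : ↥X,
            α ⟨rtRep J W ↑x₀ ↑f', hstB ↑x₀ ↑f' f'.2⟩ := by
            rw [Finset.sum_congr rfl fun x₀ _ => h1 x₀]
        _ = α ((Nat.card ↥X : ℂ)⁻¹ • ∑ x₀ : ↥X,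
            (⟨rtRep J W ↑x₀ ↑f', hstB ↑x₀ ↑f' f'.2⟩ : ↥(indInfl Y L ρ))) := by
            rw [map_smul, map_sum]
        _ = α (Fb ((Nat.card ↥X : ℂ)⁻¹ • ∑ x : ↥X, (f' : J → W) ↑x)) := by rw [← h2]
        _ = β ((Nat.card ↥X : ℂ)⁻¹ • ∑ x : ↥X, (f' : J → W) ↑x) := rfl
    apply LinearMap.ext
    intro f
    apply Subtype.ext
    funext g
    show c • (avgL X W ↑f g) = (φ f : J → W) g
    rw [hval f g, hsum ⟨rtRep J W g ↑f, hstB g ↑f f.2⟩, hc, avgL_apply]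
    simp only [rtRep_apply]
  · rw [Submodule.span_le, Set.singleton_subset_iff, SetLike.mem_coe, mem_homSubSub]
    intro g f hx
    show avgL X W (rtRep J W g (f : J → W)) = rtRep J W g (avgL X W (f : J → W))
    exact avgL_rt_comm X g (f : J → W)

lemma dim_one_of_span {M : Type*} [AddCommGroup M] [Module ℂ M] {v : M} {S : Submodule ℂ M}
    (hv : v ≠ 0) (hS : S = Submodule.span ℂ {v}) : dimC S = 1 := by
  subst hS
  exact finrank_span_singleton hv

lemma dim_bot_eq_zero {M : Type*} [AddCommGroup M] [Module ℂ M] {S : Submodule ℂ M}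
    (hS : S = ⊥) : dimC S = 0 := by
  subst hS
  exact finrank_bot ℂ M

end Aux2

section Statement3

variable {J : Type*} [Group J] [Fintype J]

/-- Let `J = ULV` be a finite group with an Iwahori decomposition and let `ρ` be an
irreducible `ℂ[L]`-module.  Then the parahorically induced `ℂ[J]`-module
`i_{U,V}ρ = ℂ[J]e_V e_U ⊗_{ℂ[L]} ρ` (realized as the image of the averaging operator
`I_U` inside `i_U ρ`) is irreducible; it occurs with multiplicity exactly one in each of
`i_U ρ` and `i_V ρ`; and every irreducible `ℂ[J]`-module occurring with nonzero
multiplicity in both `i_U ρ` and `i_V ρ` is isomorphic to `i_{U,V}ρ`.  (Multiplicity of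
`π` in `X` means `dim_ℂ Hom_{ℂ[J]}(π, X)`.) -/
theorem parInd_irreducible_and_multiplicity_one
    (U L V : Subgroup J) (hIw : IwahoriDecomp (⊤ : Subgroup J) U L V)
    {W : Type*} [AddCommGroup W] [Module ℂ W] [FiniteDimensional ℂ W]
    (ρ : Representation ℂ ↥L W) (hρ : IsIrreducible ρ) :
    IsIrreducibleSub (rtRep J W) (parInd U L V ρ) ∧
    dimC (M := ↥(parInd U L V ρ) →ₗ[ℂ] ↥(indInfl U L ρ))
      (homSubSub (rtRep J W) (parInd U L V ρ) (rtRep J W) (indInfl U L ρ)) = 1 ∧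
    dimC (M := ↥(parInd U L V ρ) →ₗ[ℂ] ↥(indInfl V L ρ))
      (homSubSub (rtRep J W) (parInd U L V ρ) (rtRep J W) (indInfl V L ρ)) = 1 ∧
    ∀ {W₂ : Type} [AddCommGroup W₂] [Module ℂ W₂] [FiniteDimensional ℂ W₂]
      (π : Representation ℂ J W₂), IsIrreducible π →
      dimC (M := W₂ →ₗ[ℂ] ↥(indInfl U L ρ)) (homFullSub π (rtRep J W) (indInfl U L ρ)) ≠ 0 →
      dimC (M := W₂ →ₗ[ℂ] ↥(indInfl V L ρ)) (homFullSub π (rtRep J W) (indInfl V L ρ)) ≠ 0 →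
      IsoFullSub π (rtRep J W) (parInd U L V ρ) := by
  classical
  obtain ⟨hnU, hnV, hbij⟩ := hIw
  have hUn : ∀ l ∈ L, ∀ u ∈ U, l * u * l⁻¹ ∈ U := fun l hl u hu =>
    (Subgroup.mem_normalizer_iff.mp (hnU hl) u).mp hu
  have hVn : ∀ l ∈ L, ∀ v ∈ V, l * v * l⁻¹ ∈ V := fun l hl v hv =>
    (Subgroup.mem_normalizer_iff.mp (hnV hl) v).mp hv
  have hexULV : ∀ g : J, ∃ u l v : J, u ∈ U ∧ l ∈ L ∧ v ∈ V ∧ u * l * v = g := by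
    intro g
    have hg : g ∈ ((⊤ : Subgroup J) : Set J) := by simp
    obtain ⟨⟨u, l, v⟩, hmem, heq⟩ := hbij.surjOn hg
    exact ⟨u, l, v, hmem.1, hmem.2.1, hmem.2.2, heq⟩
  have huniqULV : ∀ u l v u' l' v' : J, u ∈ U → l ∈ L → v ∈ V → u' ∈ U → l' ∈ L → v' ∈ V →
      u * l * v = u' * l' * v' → u = u' ∧ l = l' ∧ v = v' := by
    intro u l v u' l' v' h1 h2 h3 h4 h5 h6 heq
    have h7 : ((u, l, v) : J × J × J) = (u', l', v') :=
      hbij.injOn ⟨h1, h2, h3⟩ ⟨h4, h5, h6⟩ heq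
    refine ⟨(Prod.ext_iff.mp h7).1, ?_, ?_⟩
    · exact (Prod.ext_iff.mp (Prod.ext_iff.mp h7).2).1
    · exact (Prod.ext_iff.mp (Prod.ext_iff.mp h7).2).2
  have hexVLU : ∀ g : J, ∃ v l u : J, v ∈ V ∧ l ∈ L ∧ u ∈ U ∧ v * l * u = g := by
    intro g
    obtain ⟨u, l, v, h1, h2, h3, h4⟩ := hexULV g⁻¹
    refine ⟨v⁻¹, l⁻¹, u⁻¹, V.inv_mem h3, L.inv_mem h2, U.inv_mem h1, ?_⟩
    rw [← inv_inv g, ← h4]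
    group
  have huniqVLU : ∀ v l u v' l' u' : J, v ∈ V → l ∈ L → u ∈ U → v' ∈ V → l' ∈ L → u' ∈ U →
      v * l * u = v' * l' * u' → v = v' ∧ l = l' ∧ u = u' := by
    intro v l u v' l' u' h1 h2 h3 h4 h5 h6 heq
    have heq' : u⁻¹ * l⁻¹ * v⁻¹ = u'⁻¹ * l'⁻¹ * v'⁻¹ := by
      have := congrArg (fun z : J => z⁻¹) heq
      simpa [mul_assoc] using this
    obtain ⟨e1, e2, e3⟩ := huniqULV _ _ _ _ _ _ (U.inv_mem h3) (L.inv_mem h2) (V.inv_mem h1)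
      (U.inv_mem h6) (L.inv_mem h5) (V.inv_mem h4) heq'
    exact ⟨inv_injective e3, inv_injective e2, inv_injective e1⟩
  have hmemT : ∀ f ∈ indInfl V L ρ, avgL U W f ∈ indInfl U L ρ := by
    intro f hf
    refine avgL_mem_indInfl U L ρ hUn f ?_
    intro l g hl
    have := mem_indInfl.mp hf 1 l g V.one_mem hl
    simpa using this
  have hmemS : ∀ f ∈ indInfl U L ρ, avgL V W f ∈ indInfl V L ρ := by
    intro f hf
    refine avgL_mem_indInfl V L ρ hVn f ?_
    intro l g hl
    have := mem_indInfl.mp hf 1 l g U.one_mem hl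
    simpa using this
  have hspanBA := hom_span U V L ρ hρ hUn hVn hexVLU huniqVLU hmemT
  have hspanAB := hom_span V U L ρ hρ hVn hUn hexULV huniqULV hmemS
  obtain ⟨w₀, -, hw₀⟩ := (Submodule.ne_bot_iff _).mp hρ.1
  obtain ⟨F, hFB, hFX⟩ := exists_fW V L U ρ hVn hexVLU huniqVLU
  have havg1 : ∀ w : W, avgL U W (F w) 1 = w := by
    intro w
    letI : Fintype ↥U := Fintype.ofFinite ↥U
    have hcne : ((Fintype.card ↥U : ℕ) : ℂ) ≠ 0 := Nat.cast_ne_zero.mpr Fintype.card_ne_zero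
    have hsc : ∑ x : ↥U, F w (↑x * 1) = ∑ _x : ↥U, w :=
      Finset.sum_congr rfl fun x _ => by rw [mul_one]; exact hFX w ↑x x.2
    rw [avgL_apply, hsc, Finset.sum_const, Finset.card_univ, ← Nat.cast_smul_eq_nsmul ℂ,
      smul_smul, Nat.card_eq_fintype_card, inv_mul_cancel₀ hcne, one_smul]
  have hPA : parInd U L V ρ ≤ indInfl U L ρ := by
    intro q hq
    obtain ⟨f, hf, rfl⟩ := Submodule.mem_map.mp hq
    exact hmemT f hf
  have hstA := stable_indInfl U L ρ (W := W)
  have hstB := stable_indInfl V L ρ (W := W)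
  have hstP : Stable (rtRep J W) (parInd U L V ρ) := by
    intro g q hq
    obtain ⟨f, hf, rfl⟩ := Submodule.mem_map.mp hq
    exact Submodule.mem_map.mpr ⟨rtRep J W g f, hstB g f hf, avgL_rt_comm U g f⟩
  have hmemP : ∀ f ∈ indInfl V L ρ, avgL U W f ∈ parInd U L V ρ := fun f hf =>
    Submodule.mem_map.mpr ⟨f, hf, rfl⟩
  have hPne : parInd U L V ρ ≠ ⊥ := by
    intro h0
    apply hw₀
    have h1 : avgL U W (F w₀) ∈ (⊥ : Submodule ℂ (J → W)) := h0 ▸ hmemP _ (hFB w₀)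
    have h2 := (Submodule.mem_bot ℂ).mp h1
    rw [← havg1 w₀, h2]
    rfl
  -- Part 1 : irreducibility
  have hPirr : IsIrreducibleSub (rtRep J W) (parInd U L V ρ) := by
    refine ⟨hPne, ?_⟩
    intro N hNP hNst
    by_cases hN0 : N = ⊥
    · exact Or.inl hN0
    right
    obtain ⟨p, hpmem, hpid, hpeq⟩ := exists_equivariant_proj (rtRep J W) N hNst
    have hmem1 : ∀ f ∈ indInfl V L ρ, p (avgL U W f) ∈ indInfl U L ρ := fun f hf =>
      hPA (hNP (hpmem _))
    have hφ₁mem : (p ∘ₗ avgL U W).restrict hmem1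
        ∈ homSubSub (rtRep J W) (indInfl V L ρ) (rtRep J W) (indInfl U L ρ) := by
      rw [mem_homSubSub]
      intro g f hx
      show p (avgL U W (rtRep J W g (f : J → W))) = rtRep J W g (p (avgL U W (f : J → W)))
      rw [avgL_rt_comm, hpeq]
    rw [hspanBA, Submodule.mem_span_singleton] at hφ₁mem
    obtain ⟨cc, hcc⟩ := hφ₁mem
    have hccval : ∀ f, ∀ hf : f ∈ indInfl V L ρ, cc • avgL U W f = p (avgL U W f) := by
      intro f hf
      exact congrArg Subtype.val (LinearMap.congr_fun hcc ⟨f, hf⟩)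
    by_cases hc0 : cc = 0
    · exfalso
      apply hN0
      rw [eq_bot_iff]
      intro n hn
      obtain ⟨f, hf, rfl⟩ := Submodule.mem_map.mp (hNP hn)
      have h1 : p (avgL U W f) = 0 := by rw [← hccval f hf, hc0, zero_smul]
      rw [Submodule.mem_bot, ← hpid _ hn, h1]
    · have hPN : parInd U L V ρ ≤ N := by
        intro q hq
        obtain ⟨f, hf, rfl⟩ := Submodule.mem_map.mp hq
        have h1 : avgL U W f = cc⁻¹ • p (avgL U W f) := by
          rw [← hccval f hf, smul_smul, inv_mul_cancel₀ hc0, one_smul]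
        rw [h1]
        exact N.smul_mem _ (hpmem _)
      exact le_antisymm hNP hPN
  -- Part 2
  have hdim2 : dimC (M := ↥(parInd U L V ρ) →ₗ[ℂ] ↥(indInfl U L ρ))
      (homSubSub (rtRep J W) (parInd U L V ρ) (rtRep J W) (indInfl U L ρ)) = 1 := by
    have hinc : homSubSub (rtRep J W) (parInd U L V ρ) (rtRep J W) (indInfl U L ρ)
        = Submodule.span ℂ {Submodule.inclusion hPA} := by
      apply le_antisymm
      · intro φ hφ
        rw [mem_homSubSub] at hφ
        rw [Submodule.mem_span_singleton]
        have hcomp : (φ ∘ₗ (avgL U W).restrict hmemP)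
            ∈ homSubSub (rtRep J W) (indInfl V L ρ) (rtRep J W) (indInfl U L ρ) := by
          rw [mem_homSubSub]
          intro g f hx
          have h1 : (avgL U W).restrict hmemP ⟨rtRep J W g (f : J → W), hx⟩
              = ⟨rtRep J W g ↑((avgL U W).restrict hmemP f),
                 hstP g _ ((avgL U W).restrict hmemP f).2⟩ :=
            Subtype.ext (avgL_rt_comm U g (f : J → W))
          show (φ ((avgL U W).restrict hmemP ⟨rtRep J W g (f : J → W), hx⟩) : J → W) = _
          rw [h1]
          exact hφ g _ _
        rw [hspanBA, Submodule.mem_span_singleton] at hcomp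
        obtain ⟨a, ha⟩ := hcomp
        refine ⟨a, ?_⟩
        apply LinearMap.ext
        rintro ⟨q, hq⟩
        obtain ⟨f, hf, rfl⟩ := Submodule.mem_map.mp hq
        apply Subtype.ext
        exact congrArg Subtype.val (LinearMap.congr_fun ha ⟨f, hf⟩)
      · rw [Submodule.span_le, Set.singleton_subset_iff, SetLike.mem_coe, mem_homSubSub]
        intro g q hx
        rfl
    have hne : Submodule.inclusion hPA ≠ 0 := by
      obtain ⟨q, hq, hqne⟩ := (Submodule.ne_bot_iff _).mp hPne
      intro h0
      have h1 := congrArg Subtype.val (LinearMap.congr_fun h0 ⟨q, hq⟩)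
      exact hqne h1
    exact dim_one_of_span hne hinc
  -- Part 3
  have hdim3 : dimC (M := ↥(parInd U L V ρ) →ₗ[ℂ] ↥(indInfl V L ρ))
      (homSubSub (rtRep J W) (parInd U L V ρ) (rtRep J W) (indInfl V L ρ)) = 1 := by
    have hmemSP : ∀ q ∈ parInd U L V ρ, avgL V W q ∈ indInfl V L ρ := fun q hq =>
      hmemS q (hPA hq)
    have hκ₂mem : (avgL V W).restrict hmemSP
        ∈ homSubSub (rtRep J W) (parInd U L V ρ) (rtRep J W) (indInfl V L ρ) := by
      rw [mem_homSubSub]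
      intro g q hx
      show avgL V W (rtRep J W g (q : J → W)) = rtRep J W g (avgL V W (q : J → W))
      exact avgL_rt_comm V g (q : J → W)
    have hup : ∀ φ ∈ homSubSub (rtRep J W) (parInd U L V ρ) (rtRep J W) (indInfl V L ρ),
        ∃ a : ℂ, φ = a • (avgL V W).restrict hmemSP := by
      intro φ hφ
      rw [mem_homSubSub] at hφ
      obtain ⟨pP, hpPmem, hpPid, hpPeq⟩ :=
        exists_equivariant_proj (rtRep J W) (parInd U L V ρ) hstP
      have hr : ∀ f ∈ indInfl U L ρ, pP f ∈ parInd U L V ρ := fun f _ => hpPmem f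
      have hcomp : (φ ∘ₗ pP.restrict hr)
          ∈ homSubSub (rtRep J W) (indInfl U L ρ) (rtRep J W) (indInfl V L ρ) := by
        rw [mem_homSubSub]
        intro g a hx
        have h1 : pP.restrict hr ⟨rtRep J W g (a : J → W), hx⟩
            = ⟨rtRep J W g ↑(pP.restrict hr a), hstP g _ (pP.restrict hr a).2⟩ :=
          Subtype.ext (hpPeq g (a : J → W))
        show (φ (pP.restrict hr ⟨rtRep J W g (a : J → W), hx⟩) : J → W) = _
        rw [h1]
        exact hφ g _ _
      rw [hspanAB, Submodule.mem_span_singleton] at hcomp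
      obtain ⟨a, ha⟩ := hcomp
      refine ⟨a, ?_⟩
      apply LinearMap.ext
      intro q
      have h2 := LinearMap.congr_fun ha ⟨(q : J → W), hPA q.2⟩
      have h3 : pP.restrict hr ⟨(q : J → W), hPA q.2⟩ = q := Subtype.ext (hpPid _ q.2)
      rw [LinearMap.comp_apply, h3] at h2
      apply Subtype.ext
      exact (congrArg Subtype.val h2).symm
    -- a nonzero element
    have hstK : Stable (rtRep J W) (indInfl V L ρ ⊓ LinearMap.ker (avgL U W)) := by
      intro g f hf
      refine ⟨hstB g f hf.1, LinearMap.mem_ker.mpr ?_⟩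
      rw [avgL_rt_comm, LinearMap.mem_ker.mp hf.2, map_zero]
    obtain ⟨pK, hpKmem, hpKid, hpKeq⟩ := exists_equivariant_proj (rtRep J W) _ hstK
    have hTc : ∀ f ∈ (indInfl V L ρ ⊓ LinearMap.ker pK), avgL U W f ∈ parInd U L V ρ :=
      fun f hf => hmemP f hf.1
    have hTcinj : Function.Injective ((avgL U W).restrict hTc) := by
      have hker : ∀ f : ↥(indInfl V L ρ ⊓ LinearMap.ker pK),
          (avgL U W).restrict hTc f = 0 → f = 0 := by
        intro f h0
        have h1 : avgL U W (f : J → W) = 0 := congrArg Subtype.val h0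
        have h2 : (f : J → W) ∈ indInfl V L ρ ⊓ LinearMap.ker (avgL U W) :=
          ⟨f.2.1, LinearMap.mem_ker.mpr h1⟩
        have h3 := hpKid _ h2
        have h4 : pK (f : J → W) = 0 := LinearMap.mem_ker.mp f.2.2
        exact Subtype.ext (by rw [← h3, h4]; rfl)
      intro f f' hff
      have := hker (f - f') (by rw [map_sub, hff, sub_self])
      rwa [sub_eq_zero] at this
    have hTcsurj : Function.Surjective ((avgL U W).restrict hTc) := by
      rintro ⟨q, hq⟩
      obtain ⟨f, hf, rfl⟩ := Submodule.mem_map.mp hq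
      have hm1 : f - pK f ∈ indInfl V L ρ ⊓ LinearMap.ker pK :=
        Submodule.mem_inf.mpr ⟨(indInfl V L ρ).sub_mem hf (hpKmem f).1,
          LinearMap.mem_ker.mpr (by rw [map_sub, hpKid _ (hpKmem f), sub_self])⟩
      refine ⟨⟨f - pK f, hm1⟩, ?_⟩
      apply Subtype.ext
      show avgL U W (f - pK f) = avgL U W f
      rw [map_sub, LinearMap.mem_ker.mp (hpKmem f).2, sub_zero]
    have hbijTc : Function.Bijective ((avgL U W).restrict hTc) := ⟨hTcinj, hTcsurj⟩
    set e := LinearEquiv.ofBijective ((avgL U W).restrict hTc) hbijTc with hedef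
    have hstBc : Stable (rtRep J W) (indInfl V L ρ ⊓ LinearMap.ker pK) := by
      intro g f hf
      refine ⟨hstB g f hf.1, LinearMap.mem_ker.mpr ?_⟩
      rw [hpKeq, LinearMap.mem_ker.mp hf.2, map_zero]
    have hesymm : ∀ (g : J) (q : ↥(parInd U L V ρ)) (hq : rtRep J W g ↑q ∈ parInd U L V ρ),
        ((e.symm ⟨rtRep J W g ↑q, hq⟩ : ↥(indInfl V L ρ ⊓ LinearMap.ker pK)) : J → W)
          = rtRep J W g ↑(e.symm q) := by
      intro g q hq
      have hb := hstBc g ↑(e.symm q) (e.symm q).2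
      have h1 : ((avgL U W).restrict hTc) ⟨rtRep J W g ↑(e.symm q), hb⟩
          = ⟨rtRep J W g ↑q, hq⟩ := by
        apply Subtype.ext
        show avgL U W (rtRep J W g ↑(e.symm q)) = rtRep J W g (q : J → W)
        rw [avgL_rt_comm]
        have h2 : e (e.symm q) = q := e.apply_symm_apply q
        have h3 : avgL U W ↑(e.symm q) = (q : J → W) := congrArg Subtype.val h2
        rw [h3]
      have h3 : e.symm ⟨rtRep J W g (q : J → W), hq⟩ = ⟨rtRep J W g ↑(e.symm q), hb⟩ := by
        rw [← h1]
        exact e.symm_apply_apply _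
      rw [h3]
    have hκmem : (Submodule.inclusion (inf_le_left :
          indInfl V L ρ ⊓ LinearMap.ker pK ≤ indInfl V L ρ)) ∘ₗ e.symm.toLinearMap
        ∈ homSubSub (rtRep J W) (parInd U L V ρ) (rtRep J W) (indInfl V L ρ) := by
      rw [mem_homSubSub]
      intro g q hq
      exact hesymm g q hq
    have hκne : (Submodule.inclusion (inf_le_left :
          indInfl V L ρ ⊓ LinearMap.ker pK ≤ indInfl V L ρ)) ∘ₗ e.symm.toLinearMap ≠ 0 := by
      obtain ⟨q, hq, hqne⟩ := (Submodule.ne_bot_iff _).mp hPne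
      intro h0
      have h1 := congrArg Subtype.val (LinearMap.congr_fun h0 ⟨q, hq⟩)
      apply hqne
      have h2 : e.symm ⟨q, hq⟩ = 0 := Subtype.ext h1
      have h3 := congrArg e h2
      rw [e.apply_symm_apply, map_zero] at h3
      exact congrArg Subtype.val h3
    have hκ₂ne : (avgL V W).restrict hmemSP ≠ 0 := by
      obtain ⟨a, ha⟩ := hup _ hκmem
      intro h0
      rw [h0, smul_zero] at ha
      exact hκne ha
    have hspanP : homSubSub (rtRep J W) (parInd U L V ρ) (rtRep J W) (indInfl V L ρ)
        = Submodule.span ℂ {(avgL V W).restrict hmemSP} := by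
      apply le_antisymm
      · intro φ hφ
        rw [Submodule.mem_span_singleton]
        obtain ⟨a, ha⟩ := hup φ hφ
        exact ⟨a, ha.symm⟩
      · rw [Submodule.span_le, Set.singleton_subset_iff, SetLike.mem_coe]
        exact hκ₂mem
    exact dim_one_of_span hκ₂ne hspanP
  refine ⟨hPirr, hdim2, hdim3, ?_⟩
  -- Part 4
  intro W₂ _ _ _ π hπ h1 h2
  have hne1 : homFullSub π (rtRep J W) (indInfl U L ρ) ≠ ⊥ := by
    intro hb
    exact h1 (dim_bot_eq_zero hb)
  have hne2 : homFullSub π (rtRep J W) (indInfl V L ρ) ≠ ⊥ := by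
    intro hb
    exact h2 (dim_bot_eq_zero hb)
  obtain ⟨φ, hφm, hφne⟩ := (Submodule.ne_bot_iff _).mp hne1
  obtain ⟨ψ, hψm, hψne⟩ := (Submodule.ne_bot_iff _).mp hne2
  rw [mem_homFullSub] at hφm hψm
  have hφinj : Function.Injective φ := by
    have hst : Stable π (LinearMap.ker φ) := by
      intro g x hx
      rw [LinearMap.mem_ker] at hx ⊢
      apply Subtype.ext
      rw [hφm g x, hx]
      simp
    rcases hπ.2 _ hst with h | h
    · exact LinearMap.ker_eq_bot.mp h
    · exfalso
      apply hφne
      apply LinearMap.ext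
      intro x
      exact LinearMap.mem_ker.mp (h ▸ Submodule.mem_top : x ∈ LinearMap.ker φ)
  have hψinj : Function.Injective ψ := by
    have hst : Stable π (LinearMap.ker ψ) := by
      intro g x hx
      rw [LinearMap.mem_ker] at hx ⊢
      apply Subtype.ext
      rw [hψm g x, hx]
      simp
    rcases hπ.2 _ hst with h | h
    · exact LinearMap.ker_eq_bot.mp h
    · exfalso
      apply hψne
      apply LinearMap.ext
      intro x
      exact LinearMap.mem_ker.mp (h ▸ Submodule.mem_top : x ∈ LinearMap.ker ψ)
  have hψR : ∀ x : W₂, ((ψ x : J → W)) ∈ (LinearMap.range ψ).map (indInfl V L ρ).subtype :=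
    fun x => Submodule.mem_map.mpr ⟨ψ x, LinearMap.mem_range_self _ _, rfl⟩
  have hstR : Stable (rtRep J W) ((LinearMap.range ψ).map (indInfl V L ρ).subtype) := by
    intro g r hr
    obtain ⟨b, hb, rfl⟩ := Submodule.mem_map.mp hr
    obtain ⟨x, rfl⟩ := hb
    refine Submodule.mem_map.mpr ⟨ψ (π g x), LinearMap.mem_range_self _ _, ?_⟩
    exact hψm g x
  obtain ⟨pR, hpRmem, hpRid, hpReq⟩ := exists_equivariant_proj (rtRep J W) _ hstR
  have hψRbij : Function.Bijective (LinearMap.codRestrict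
      ((LinearMap.range ψ).map (indInfl V L ρ).subtype)
      ((indInfl V L ρ).subtype ∘ₗ ψ) hψR) := by
    constructor
    · intro x x' hxx
      have h5 := congrArg Subtype.val hxx
      exact hψinj (Subtype.ext h5)
    · rintro ⟨r, hr⟩
      obtain ⟨b, hb, rfl⟩ := Submodule.mem_map.mp hr
      obtain ⟨x, rfl⟩ := hb
      exact ⟨x, rfl⟩
  set ψe := LinearEquiv.ofBijective _ hψRbij with hψedef
  set qmap : ↥(indInfl V L ρ) →ₗ[ℂ] W₂ :=
    ψe.symm.toLinearMap ∘ₗ pR.restrict (fun b _ => hpRmem b) with hqdef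
  have hqψ : ∀ x : W₂, qmap (ψ x) = x := by
    intro x
    have h3 : pR.restrict (fun b (_ : b ∈ indInfl V L ρ) => hpRmem b) (ψ x) = ψe x :=
      Subtype.ext (hpRid _ (hψR x))
    show ψe.symm (pR.restrict (fun b _ => hpRmem b) (ψ x)) = x
    rw [h3, ψe.symm_apply_apply]
  have hcoeψe : ∀ z, ((ψ (ψe.symm z) : J → W)) = ↑z :=
    fun z => congrArg Subtype.val (ψe.apply_symm_apply z)
  have hqeq : ∀ (g : J) (b : ↥(indInfl V L ρ)) (hb : rtRep J W g ↑b ∈ indInfl V L ρ),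
      qmap ⟨rtRep J W g ↑b, hb⟩ = π g (qmap b) := by
    intro g b hb
    apply hψinj
    apply Subtype.ext
    show ((ψ (qmap ⟨rtRep J W g ↑b, hb⟩) : J → W)) = ((ψ (π g (qmap b)) : J → W))
    rw [hψm g (qmap b)]
    have hL : ((ψ (qmap ⟨rtRep J W g ↑b, hb⟩) : J → W)) = pR (rtRep J W g ↑b) :=
      hcoeψe (pR.restrict (fun b _ => hpRmem b) ⟨rtRep J W g ↑b, hb⟩)
    have hR : ((ψ (qmap b) : J → W)) = pR ↑b :=
      hcoeψe (pR.restrict (fun b _ => hpRmem b) b)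
    rw [hL, hR, hpReq]
  have hχmem : (φ ∘ₗ qmap)
      ∈ homSubSub (rtRep J W) (indInfl V L ρ) (rtRep J W) (indInfl U L ρ) := by
    rw [mem_homSubSub]
    intro g b hb
    show (φ (qmap ⟨rtRep J W g ↑b, hb⟩) : J → W) = rtRep J W g ↑(φ (qmap b))
    rw [hqeq g b hb]
    exact hφm g (qmap b)
  rw [hspanBA, Submodule.mem_span_singleton] at hχmem
  obtain ⟨cχ, hcχ⟩ := hχmem
  have hχval : ∀ b : ↥(indInfl V L ρ), cχ • avgL U W (b : J → W) = (φ (qmap b) : J → W) :=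
    fun b => congrArg Subtype.val (LinearMap.congr_fun hcχ b)
  have hcχne : cχ ≠ 0 := by
    intro h0
    obtain ⟨x, hxne⟩ : ∃ x, φ x ≠ 0 := by
      by_contra hh
      push_neg at hh
      exact hφne (LinearMap.ext fun x => hh x)
    apply hxne
    have h3 := hχval (ψ x)
    rw [hqψ x, h0, zero_smul] at h3
    exact Subtype.ext h3.symm
  have himg1 : ∀ x : W₂, (φ x : J → W) ∈ parInd U L V ρ := by
    intro x
    have h3 := hχval (ψ x)
    rw [hqψ x] at h3
    rw [← h3]
    exact Submodule.smul_mem _ _ (hmemP _ (ψ x).2)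
  have himg2 : ∀ q ∈ parInd U L V ρ, ∃ x : W₂, (φ x : J → W) = q := by
    intro q hq
    obtain ⟨f, hf, rfl⟩ := Submodule.mem_map.mp hq
    refine ⟨cχ⁻¹ • qmap ⟨f, hf⟩, ?_⟩
    have h3 := hχval ⟨f, hf⟩
    show ((φ (cχ⁻¹ • qmap ⟨f, hf⟩) : J → W)) = avgL U W f
    rw [map_smul]
    show cχ⁻¹ • ((φ (qmap ⟨f, hf⟩)) : J → W) = avgL U W f
    rw [← h3, smul_smul, inv_mul_cancel₀ hcχne, one_smul]
  have hφPbij : Function.Bijective (LinearMap.codRestrict (parInd U L V ρ)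
      ((indInfl U L ρ).subtype ∘ₗ φ) himg1) := by
    constructor
    · intro x x' hxx
      have h5 := congrArg Subtype.val hxx
      exact hφinj (Subtype.ext h5)
    · rintro ⟨q, hq⟩
      obtain ⟨x, hx⟩ := himg2 q hq
      exact ⟨x, Subtype.ext hx⟩
  refine ⟨LinearEquiv.ofBijective _ hφPbij, ?_⟩
  intro g x
  exact hφm g x


end Statement3


end Parahoric
end
end

section
/- Let π be an irreducible finite-dimensional ℂ[J]-module. Then dim_ℂ Hom_{ℂ[L]}(π^V, π^U) ≤ 1. If this dimension is 0, then r_{U,V}π = 0. If it is 1, then π^U, π^V and r_{U,V}π are pairwise isomorphic irreducible ℂ[L]-modules. -/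
open scoped BigOperators

set_option maxHeartbeats 1000000
set_option synthInstance.maxHeartbeats 1000000

noncomputable section

namespace Parahoric

variable {G : Type*} [Group G]

section Helpers

variable {J : Type*} [Group J] [Fintype J] {W : Type*} [AddCommGroup W] [Module ℂ W]
variable (π : Representation ℂ J W)

lemma avgMap_eq (H : Subgroup J) [Fintype ↥H] :
    avgMap π H = (Nat.card ↥H : ℂ)⁻¹ • ∑ h : ↥H, π ↑h := by
  rw [avgMap]; congr!

lemma pi_mul_apply (g₁ g₂ : J) (x : W) : π (g₁ * g₂) x = π g₁ (π g₂ x) := by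
  rw [map_mul]; rfl

lemma avgMap_apply (H : Subgroup J) [Fintype ↥H] (x : W) :
    avgMap π H x = (Nat.card ↥H : ℂ)⁻¹ • ∑ h : ↥H, π ↑h x := by
  rw [avgMap_eq]
  simp [LinearMap.sum_apply]

/-- Conjugation equivalence on a subgroup normalized by `l`. -/
def conjEquiv (H : Subgroup J) {l : J} (hl : l ∈ Subgroup.normalizer (H : Set J)) : ↥H ≃ ↥H where
  toFun h := ⟨l * ↑h * l⁻¹, (Subgroup.mem_normalizer_iff.mp hl ↑h).mp h.2⟩
  invFun h := ⟨l⁻¹ * ↑h * l, by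
    apply (Subgroup.mem_normalizer_iff.mp hl (l⁻¹ * ↑h * l)).mpr
    have heq : l * (l⁻¹ * ↑h * l) * l⁻¹ = ↑h := by group
    rw [heq]; exact h.2⟩
  left_inv h := by ext; simp only; group
  right_inv h := by ext; simp only; group

lemma pi_avg (H : Subgroup J) {h : J} (hh : h ∈ H) (x : W) :
    π h (avgMap π H x) = avgMap π H x := by
  letI : Fintype ↥H := Fintype.ofFinite _
  rw [avgMap_apply, map_smul, map_sum]
  congr 1
  refine Eq.trans (Finset.sum_congr rfl fun a _ => ?_)
    (Equiv.sum_comp (Equiv.mulLeft (⟨h, hh⟩ : ↥H)) (fun a : ↥H => π ↑a x))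
  show π h (π ↑a x) = π ↑((⟨h, hh⟩ : ↥H) * a) x
  rw [Subgroup.coe_mul, map_mul]
  rfl

lemma avg_pi (H : Subgroup J) {h : J} (hh : h ∈ H) (x : W) :
    avgMap π H (π h x) = avgMap π H x := by
  letI : Fintype ↥H := Fintype.ofFinite _
  rw [avgMap_apply, avgMap_apply]
  congr 1
  refine Eq.trans (Finset.sum_congr rfl fun a _ => ?_)
    (Equiv.sum_comp (Equiv.mulRight (⟨h, hh⟩ : ↥H)) (fun a : ↥H => π ↑a x))
  show π ↑a (π h x) = π ↑(a * (⟨h, hh⟩ : ↥H)) x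
  rw [Subgroup.coe_mul, map_mul]
  rfl

lemma avg_comm (H : Subgroup J) {l : J} (hl : l ∈ Subgroup.normalizer (H : Set J)) (x : W) :
    avgMap π H (π l x) = π l (avgMap π H x) := by
  letI : Fintype ↥H := Fintype.ofFinite _
  rw [avgMap_apply, avgMap_apply, map_smul, map_sum]
  congr 1
  refine Eq.trans (Finset.sum_congr rfl fun a _ => ?_)
    (Equiv.sum_comp (conjEquiv H hl).symm (fun a : ↥H => π l (π ↑a x)))
  show π ↑a (π l x) = π l (π (l⁻¹ * ↑a * l) x)
  rw [← pi_mul_apply, ← pi_mul_apply]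
  have h3 : (↑a : J) * l = l * (l⁻¹ * ↑a * l) := by group
  rw [h3]

lemma avg_mem_fixed (H : Subgroup J) (x : W) : avgMap π H x ∈ fixedSub π H :=
  fun h hh => pi_avg π H hh x

lemma avg_fixed_eq (H : Subgroup J) {x : W} (hx : x ∈ fixedSub π H) :
    avgMap π H x = x := by
  letI : Fintype ↥H := Fintype.ofFinite _
  rw [avgMap_apply]
  rw [Finset.sum_congr rfl fun (h : ↥H) _ => hx ↑h h.2]
  rw [Finset.sum_const, Finset.card_univ, Nat.card_eq_fintype_card]
  rw [← Nat.cast_smul_eq_nsmul ℂ, smul_smul, inv_mul_cancel₀, one_smul]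
  exact Nat.cast_ne_zero.mpr Fintype.card_ne_zero

lemma range_avgMap (H : Subgroup J) :
    LinearMap.range (avgMap π H) = fixedSub π H := by
  apply le_antisymm
  · rintro _ ⟨x, rfl⟩; exact avg_mem_fixed π H x
  · intro x hx; exact ⟨x, avg_fixed_eq π H hx⟩

lemma fixed_stable (H : Subgroup J) {l : J} (hl : l ∈ Subgroup.normalizer (H : Set J)) {x : W}
    (hx : x ∈ fixedSub π H) : π l x ∈ fixedSub π H := by
  have h := avg_comm π H hl x
  rw [avg_fixed_eq π H hx] at h
  rw [← h]
  exact avg_mem_fixed π H _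

lemma cyclic_span (hπ : IsIrreducible π) {x : W} (hx : x ≠ 0) :
    Submodule.span ℂ (Set.range fun g : J => π g x) = ⊤ := by
  set S := Submodule.span ℂ (Set.range fun g : J => π g x) with hS
  have hst : Stable π S := by
    intro g y hy
    have hmap : Submodule.map (π g) S ≤ S := by
      rw [hS, Submodule.map_span]
      apply Submodule.span_le.mpr
      rintro _ ⟨_, ⟨g', rfl⟩, rfl⟩
      apply Submodule.subset_span
      exact ⟨g * g', pi_mul_apply π g g' x⟩
    exact hmap ⟨y, hy, rfl⟩
  rcases hπ.2 S hst with h | h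
  · exfalso
    apply hx
    have hxS : x ∈ S := Submodule.subset_span ⟨1, by simp⟩
    rw [h] at hxS
    simpa using hxS
  · exact h

section Key

variable (L : Subgroup J)

lemma key_surj {U' V' : Subgroup J}
    (hdec : ∀ g : J, ∃ u l v : J, u ∈ U' ∧ l ∈ L ∧ v ∈ V' ∧ g = u * l * v)
    (hπ : IsIrreducible π) {x₀ : W} (hx₀V : x₀ ∈ fixedSub π V') (hx₀ : x₀ ≠ 0) :
    fixedSub π U' ≤ Submodule.map (avgMap π U')
      (Submodule.span ℂ (Set.range fun l : ↥L => π ↑l x₀)) := by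
  intro w hw
  have h2 : w ∈ Submodule.span ℂ (Set.range fun g : J => π g x₀) := by
    rw [cyclic_span π hπ hx₀]; trivial
  have h3 : avgMap π U' w ∈ Submodule.map (avgMap π U')
      (Submodule.span ℂ (Set.range fun g : J => π g x₀)) := Submodule.mem_map_of_mem h2
  rw [avg_fixed_eq π U' hw] at h3
  have hle : Submodule.map (avgMap π U') (Submodule.span ℂ (Set.range fun g : J => π g x₀))
      ≤ Submodule.map (avgMap π U') (Submodule.span ℂ (Set.range fun l : ↥L => π ↑l x₀)) := by
    rw [Submodule.map_span, Submodule.map_span]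
    apply Submodule.span_mono
    rintro _ ⟨_, ⟨g, rfl⟩, rfl⟩
    obtain ⟨u, l, v, hu, hl, hv, rfl⟩ := hdec g
    refine ⟨π ↑(⟨l, hl⟩ : ↥L) x₀, ⟨⟨l, hl⟩, rfl⟩, ?_⟩
    show avgMap π U' (π l x₀) = avgMap π U' (π (u * l * v) x₀)
    rw [pi_mul_apply, pi_mul_apply, hx₀V v hv, avg_pi π U' hu]
  exact hle h3

lemma key_inj {U' V' : Subgroup J} (hnU : L ≤ Subgroup.normalizer (U' : Set J))
    (hdec : ∀ g : J, ∃ u l v : J, u ∈ U' ∧ l ∈ L ∧ v ∈ V' ∧ g = u * l * v)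
    (hπ : IsIrreducible π) (hU' : fixedSub π U' ≠ ⊥) :
    ∀ x ∈ fixedSub π V', avgMap π U' x = 0 → x = 0 := by
  intro x hxV hAx
  by_contra hx
  have hsurj := key_surj π L hdec hπ hxV hx
  have hbot : Submodule.map (avgMap π U')
      (Submodule.span ℂ (Set.range fun l : ↥L => π ↑l x)) = ⊥ := by
    rw [Submodule.map_span, Submodule.span_eq_bot]
    rintro _ ⟨_, ⟨l, rfl⟩, rfl⟩
    show avgMap π U' (π ↑l x) = 0
    rw [avg_comm π U' (hnU l.2), hAx, map_zero]
  rw [hbot] at hsurj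
  exact hU' (le_bot_iff.mp hsurj)

lemma key_map {U' V' : Subgroup J} (hnV : L ≤ Subgroup.normalizer (V' : Set J))
    (hdec : ∀ g : J, ∃ u l v : J, u ∈ U' ∧ l ∈ L ∧ v ∈ V' ∧ g = u * l * v)
    (hπ : IsIrreducible π) (hV' : fixedSub π V' ≠ ⊥) :
    Submodule.map (avgMap π U') (fixedSub π V') = fixedSub π U' := by
  apply le_antisymm
  · rintro _ ⟨x, _, rfl⟩; exact avg_mem_fixed π U' x
  · obtain ⟨x₀, hx₀V, hx₀⟩ := Submodule.exists_mem_ne_zero_of_ne_bot hV'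
    refine (key_surj π L hdec hπ hx₀V hx₀).trans (Submodule.map_mono ?_)
    rw [Submodule.span_le]
    rintro _ ⟨l, rfl⟩
    exact fixed_stable π V' (hnV l.2) hx₀V

lemma key_irr {U' V' : Subgroup J} (hnU : L ≤ Subgroup.normalizer (U' : Set J))
    (hdec : ∀ g : J, ∃ u l v : J, u ∈ U' ∧ l ∈ L ∧ v ∈ V' ∧ g = u * l * v)
    (hπ : IsIrreducible π) (hU' : fixedSub π U' ≠ ⊥) (hV' : fixedSub π V' ≠ ⊥) :
    IsIrreducibleSub (resRep π L) (fixedSub π V') := by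
  refine ⟨hV', fun T hTle hTst => ?_⟩
  by_cases hT : T = ⊥
  · exact Or.inl hT
  right
  obtain ⟨x₀, hx₀T, hx₀⟩ := Submodule.exists_mem_ne_zero_of_ne_bot hT
  refine le_antisymm hTle fun y hyV => ?_
  have hAy : avgMap π U' y ∈ fixedSub π U' := avg_mem_fixed π U' y
  obtain ⟨z, hz, hAz⟩ := key_surj π L hdec hπ (hTle hx₀T) hx₀ hAy
  have hspanT : Submodule.span ℂ (Set.range fun l : ↥L => π ↑l x₀) ≤ T := by
    rw [Submodule.span_le]
    rintro _ ⟨l, rfl⟩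
    exact hTst l x₀ hx₀T
  have hzT : z ∈ T := hspanT hz
  have h0 : avgMap π U' (z - y) = 0 := by rw [map_sub, hAz, sub_self]
  have hzy := key_inj π L hnU hdec hπ hU' (z - y)
    (Submodule.sub_mem _ (hTle hzT) hyV) h0
  rw [sub_eq_zero] at hzy
  rwa [← hzy]

end Key

lemma isoSubSub_of_eq {G : Type*} [Group G] {W : Type*} [AddCommGroup W] [Module ℂ W]
    {ρ : Representation ℂ G W} {S T : Submodule ℂ W} (h : S = T) : IsoSubSub ρ S ρ T := by
  subst h
  exact ⟨LinearEquiv.refl ℂ _, fun g x hx => rfl⟩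

end Helpers

section Statement8

variable {J : Type*} [Group J] [Fintype J]

/-- Let `J = ULV` be a finite group with an Iwahori decomposition and `π` an irreducible
finite-dimensional `ℂ[J]`-module.  Then `dim Hom_{ℂ[L]}(π^V, π^U) ≤ 1`; if this dimension
is `0` then `r_{U,V}π = 0`; if it is `1` then `π^U`, `π^V` and `r_{U,V}π` are pairwise
isomorphic irreducible `ℂ[L]`-modules. -/
theorem parRes_schur
    (U L V : Subgroup J) (hIw : IwahoriDecomp (⊤ : Subgroup J) U L V)
    {W : Type*} [AddCommGroup W] [Module ℂ W] [FiniteDimensional ℂ W]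
    (π : Representation ℂ J W) (hπ : IsIrreducible π) :
    dimC (M := ↥(fixedSub π V) →ₗ[ℂ] ↥(fixedSub π U))
        (homSubSub (resRep π L) (fixedSub π V) (resRep π L) (fixedSub π U)) ≤ 1 ∧
    (dimC (M := ↥(fixedSub π V) →ₗ[ℂ] ↥(fixedSub π U))
        (homSubSub (resRep π L) (fixedSub π V) (resRep π L) (fixedSub π U)) = 0 →
      parRes π U V = ⊥) ∧
    (dimC (M := ↥(fixedSub π V) →ₗ[ℂ] ↥(fixedSub π U))
        (homSubSub (resRep π L) (fixedSub π V) (resRep π L) (fixedSub π U)) = 1 →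
      IsIrreducibleSub (resRep π L) (fixedSub π U) ∧
      IsIrreducibleSub (resRep π L) (fixedSub π V) ∧
      IsIrreducibleSub (resRep π L) (parRes π U V) ∧
      IsoSubSub (resRep π L) (fixedSub π U) (resRep π L) (fixedSub π V) ∧
      IsoSubSub (resRep π L) (fixedSub π U) (resRep π L) (parRes π U V) ∧
      IsoSubSub (resRep π L) (fixedSub π V) (resRep π L) (parRes π U V)) := by
  classical
  obtain ⟨hnU, hnV, hbij⟩ := hIw
  have hdec : ∀ g : J, ∃ u l v : J, u ∈ U ∧ l ∈ L ∧ v ∈ V ∧ g = u * l * v := by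
    intro g
    have hg : g ∈ ((⊤ : Subgroup J) : Set J) := trivial
    obtain ⟨⟨u, l, v⟩, hq, hmul⟩ := hbij.surjOn hg
    exact ⟨u, l, v, hq.1, hq.2.1, hq.2.2, hmul.symm⟩
  have hdec' : ∀ g : J, ∃ u l v : J, u ∈ V ∧ l ∈ L ∧ v ∈ U ∧ g = u * l * v := by
    intro g
    obtain ⟨u, l, v, hu, hl, hv, h⟩ := hdec g⁻¹
    refine ⟨v⁻¹, l⁻¹, u⁻¹, V.inv_mem hv, L.inv_mem hl, U.inv_mem hu, ?_⟩
    rw [← inv_inv g, h]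
    group
  have hres : parRes π U V = Submodule.map (avgMap π U) (fixedSub π V) := by
    rw [parRes, LinearMap.range_comp, range_avgMap]
  have hmapU : ∀ x : W, avgMap π U x ∈ fixedSub π U := avg_mem_fixed π U
  by_cases hV0 : fixedSub π V = ⊥
  · haveI hsub : Subsingleton (↥(fixedSub π V) →ₗ[ℂ] ↥(fixedSub π U)) := by
      constructor
      intro a b
      apply LinearMap.ext
      intro x
      have hx0 : x = 0 :=
        Subtype.ext ((Submodule.eq_bot_iff _).mp hV0 _ x.2)
      rw [hx0, map_zero, map_zero]
    haveI hsub2 : Subsingleton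
        ↥(homSubSub (resRep π L) (fixedSub π V) (resRep π L) (fixedSub π U)) :=
      ⟨fun a b => Subtype.ext (Subsingleton.elim _ _)⟩
    have hdim0 : dimC (M := ↥(fixedSub π V) →ₗ[ℂ] ↥(fixedSub π U))
        (homSubSub (resRep π L) (fixedSub π V) (resRep π L) (fixedSub π U)) = 0 :=
      Module.finrank_zero_of_subsingleton
    refine ⟨by rw [hdim0]; norm_num, fun _ => ?_, fun h1 => ?_⟩
    · rw [hres, hV0, Submodule.map_bot]
    · rw [hdim0] at h1; exact absurd h1 zero_ne_one
  by_cases hU0 : fixedSub π U = ⊥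
  · haveI hsubU : Subsingleton ↥(fixedSub π U) := by
      constructor
      intro a b
      apply Subtype.ext
      rw [(Submodule.eq_bot_iff _).mp hU0 _ a.2, (Submodule.eq_bot_iff _).mp hU0 _ b.2]
    haveI hsub : Subsingleton (↥(fixedSub π V) →ₗ[ℂ] ↥(fixedSub π U)) :=
      ⟨fun a b => LinearMap.ext fun x => Subsingleton.elim _ _⟩
    haveI hsub2 : Subsingleton
        ↥(homSubSub (resRep π L) (fixedSub π V) (resRep π L) (fixedSub π U)) :=
      ⟨fun a b => Subtype.ext (Subsingleton.elim _ _)⟩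
    have hdim0 : dimC (M := ↥(fixedSub π V) →ₗ[ℂ] ↥(fixedSub π U))
        (homSubSub (resRep π L) (fixedSub π V) (resRep π L) (fixedSub π U)) = 0 :=
      Module.finrank_zero_of_subsingleton
    refine ⟨by rw [hdim0]; norm_num, fun _ => ?_, fun h1 => ?_⟩
    · have hle : Submodule.map (avgMap π U) (fixedSub π V) ≤ fixedSub π U := by
        rintro _ ⟨x, _, rfl⟩
        exact hmapU x
      rw [hres]
      rw [hU0] at hle
      exact le_bot_iff.mp hle
    · rw [hdim0] at h1; exact absurd h1 zero_ne_one
  -- main case: both fixed spaces are nonzero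
  have hPR : parRes π U V = fixedSub π U := by
    rw [hres, key_map π L hnV hdec hπ hV0]
  let f : ↥(fixedSub π V) →ₗ[ℂ] ↥(fixedSub π U) :=
    (avgMap π U).restrict (fun x _ => hmapU x)
  have hf_coe : ∀ x : ↥(fixedSub π V), (f x : W) = avgMap π U ↑x := fun x => rfl
  have hinj : Function.Injective f := by
    intro a b hab
    have h1 : avgMap π U ((a : W) - ↑b) = 0 := by
      rw [map_sub, sub_eq_zero, ← hf_coe, ← hf_coe, hab]
    have h2 := key_inj π L hnU hdec hπ hU0 ((a : W) - ↑b)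
      (Submodule.sub_mem _ a.2 b.2) h1
    rw [sub_eq_zero] at h2
    exact Subtype.ext h2
  have hsurj : Function.Surjective f := by
    intro w
    have hw : (w : W) ∈ Submodule.map (avgMap π U) (fixedSub π V) := by
      rw [key_map π L hnV hdec hπ hV0]
      exact w.2
    obtain ⟨x, hx, hAx⟩ := hw
    exact ⟨⟨x, hx⟩, Subtype.ext hAx⟩
  let E : ↥(fixedSub π V) ≃ₗ[ℂ] ↥(fixedSub π U) := LinearEquiv.ofBijective f ⟨hinj, hsurj⟩
  have hE_coe : ∀ x, E x = f x := fun x => rfl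
  have hfequiv : ∀ (l : ↥L) (x : ↥(fixedSub π V)) (hx : π ↑l ↑x ∈ fixedSub π V),
      ((f ⟨π ↑l ↑x, hx⟩ : ↥(fixedSub π U)) : W) = π ↑l ↑(f x) := by
    intro l x hx
    rw [hf_coe, hf_coe, avg_comm π U (hnU l.2)]
  have hEsymm : ∀ (l : ↥L) (y : ↥(fixedSub π U)) (hy : π ↑l ↑y ∈ fixedSub π U),
      ((E.symm ⟨π ↑l ↑y, hy⟩ : ↥(fixedSub π V)) : W) = π ↑l ↑(E.symm y) := by
    intro l y hy
    have hmemz : π ↑l ↑(E.symm y) ∈ fixedSub π V := fixed_stable π V (hnV l.2) (E.symm y).2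
    have hEz : E ⟨π ↑l ↑(E.symm y), hmemz⟩ = ⟨π ↑l ↑y, hy⟩ := by
      apply Subtype.ext
      rw [hE_coe, hfequiv l (E.symm y) hmemz]
      have h3 : f (E.symm y) = y := E.apply_symm_apply y
      rw [h3]
    calc ((E.symm ⟨π ↑l ↑y, hy⟩ : ↥(fixedSub π V)) : W)
        = ((E.symm (E ⟨π ↑l ↑(E.symm y), hmemz⟩) : ↥(fixedSub π V)) : W) := by rw [hEz]
      _ = π ↑l ↑(E.symm y) := by rw [E.symm_apply_apply]
  haveI hntV : Nontrivial ↥(fixedSub π V) := Submodule.nontrivial_iff_ne_bot.mpr hV0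
  have hhom : homSubSub (resRep π L) (fixedSub π V) (resRep π L) (fixedSub π U)
      = Submodule.span ℂ {f} := by
    apply le_antisymm
    · intro φ hφ
      have hφ' : ∀ (l : ↥L) (x : ↥(fixedSub π V)) (hx : π ↑l ↑x ∈ fixedSub π V),
          ((φ ⟨π ↑l ↑x, hx⟩ : ↥(fixedSub π U)) : W) = π ↑l ↑(φ x) := hφ
      set g0 : ↥(fixedSub π V) →ₗ[ℂ] ↥(fixedSub π V) := E.symm.toLinearMap ∘ₗ φ with hg0
      have hg0apply : ∀ x, g0 x = E.symm (φ x) := fun x => rfl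
      have hgequiv : ∀ (l : ↥L) (x : ↥(fixedSub π V)) (hx : π ↑l ↑x ∈ fixedSub π V),
          ((g0 ⟨π ↑l ↑x, hx⟩ : ↥(fixedSub π V)) : W) = π ↑l ↑(g0 x) := by
        intro l x hx
        have hmem : π ↑l ↑(φ x) ∈ fixedSub π U := fixed_stable π U (hnU l.2) (φ x).2
        have h1 : φ ⟨π ↑l ↑x, hx⟩ = ⟨π ↑l ↑(φ x), hmem⟩ := Subtype.ext (hφ' l x hx)
        rw [hg0apply, h1, hEsymm l (φ x) hmem, hg0apply]
      obtain ⟨μ, hμ⟩ := Module.End.exists_eigenvalue g0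
      obtain ⟨v, hv⟩ := hμ.exists_hasEigenvector
      set K := LinearMap.ker
        (g0 - μ • (LinearMap.id : ↥(fixedSub π V) →ₗ[ℂ] ↥(fixedSub π V))) with hK
      have hmemK : ∀ x : ↥(fixedSub π V), x ∈ K ↔ g0 x = μ • x := by
        intro x
        rw [hK, LinearMap.mem_ker, LinearMap.sub_apply, LinearMap.smul_apply,
          LinearMap.id_apply, sub_eq_zero]
      set T := Submodule.map (fixedSub π V).subtype K with hT
      have hTle : T ≤ fixedSub π V := Submodule.map_subtype_le _ _
      have hTst : Stable (resRep π L) T := by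
        intro l x hx
        obtain ⟨x', hx'K, rfl⟩ := hx
        have hmemV : π ↑l ↑x' ∈ fixedSub π V := fixed_stable π V (hnV l.2) x'.2
        refine ⟨⟨π ↑l ↑x', hmemV⟩, (hmemK _).mpr ?_, rfl⟩
        apply Subtype.ext
        rw [hgequiv l x' hmemV, (hmemK x').mp hx'K]
        simp [map_smul]
      have hTne : T ≠ ⊥ := by
        intro hbot
        have hvT : (↑v : W) ∈ T := ⟨v, (hmemK v).mpr hv.apply_eq_smul, rfl⟩
        rw [hbot, Submodule.mem_bot] at hvT
        exact hv.2 (Subtype.ext hvT)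
      have hirrV := key_irr π L hnU hdec hπ hU0 hV0
      rcases hirrV.2 T hTle hTst with h | h
      · exact absurd h hTne
      have hKtop : K = ⊤ := by
        apply Submodule.map_injective_of_injective (Submodule.injective_subtype (fixedSub π V))
        rw [Submodule.map_subtype_top, ← hT]
        exact h
      have hgx : ∀ x, g0 x = μ • x := by
        intro x
        refine (hmemK x).mp ?_
        rw [hKtop]
        trivial
      have hφμ : φ = μ • f := by
        apply LinearMap.ext
        intro x
        have h1 : E.symm (φ x) = μ • x := hgx x
        have h2 := congrArg E h1
        rw [LinearEquiv.apply_symm_apply, map_smul] at h2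
        rw [h2]
        rfl
      rw [hφμ]
      exact Submodule.smul_mem _ μ (Submodule.mem_span_singleton_self f)
    · rw [Submodule.span_le, Set.singleton_subset_iff, SetLike.mem_coe]
      exact hfequiv
  have hf0 : f ≠ 0 := by
    obtain ⟨x₀, hx₀V, hx₀⟩ := Submodule.exists_mem_ne_zero_of_ne_bot hV0
    intro h0
    have h1 : (⟨x₀, hx₀V⟩ : ↥(fixedSub π V)) = 0 := hinj (by rw [h0]; simp)
    exact hx₀ (by simpa using congrArg Subtype.val h1)
  have hdim1 : dimC (M := ↥(fixedSub π V) →ₗ[ℂ] ↥(fixedSub π U))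
      (homSubSub (resRep π L) (fixedSub π V) (resRep π L) (fixedSub π U)) = 1 := by
    rw [hhom]
    exact finrank_span_singleton hf0
  refine ⟨by rw [hdim1], fun h0 => ?_, fun _ => ?_⟩
  · rw [hdim1] at h0
    exact absurd h0 one_ne_zero
  · exact ⟨key_irr π L hnV hdec' hπ hV0 hU0, key_irr π L hnU hdec hπ hU0 hV0,
      by rw [hPR]; exact key_irr π L hnV hdec' hπ hV0 hU0,
      ⟨E.symm, hEsymm⟩,
      isoSubSub_of_eq hPR.symm,
      by rw [hPR]; exact ⟨E, hfequiv⟩⟩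


end Statement8


end Parahoric
end
end
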